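/- arXiv:1410.6466 — 4 statements merged into one kernel-verified Lean document; each statement's English description precedes it below -/
import Mathlib

section
/- Let A and B be symmetric real V×V matrices with A positive semidefinite. Then for every index i, the difference of i-th largest singular values satisfies |σ_i(B) − σ_i(A)| ≤ max_k |λ_k(B) − λ_k(A)|, where λ_k denotes the k-th largest eigenvalue. -/
open Matrix

/-- The decreasing rearrangement of a finite tuple of reals:
`descSort f i` is the `i`-th largest value among `f 0, …, f (n-1)` (0-indexed). -/
noncomputable def descSort {n : ℕ} (f : Fin n → ℝ) : Fin n → ℝ :=
  fun i => f (Tuple.sort f (Fin.rev i))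

/-- `svalM M i` is the `i`-th largest singular value (0-indexed) of a real matrix `M`,
defined as the square root of the `i`-th largest eigenvalue of `Mᵀ M`. -/
noncomputable def svalM {m n : ℕ} (M : Matrix (Fin m) (Fin n) ℝ) : Fin n → ℝ :=
  fun i => Real.sqrt (descSort (Matrix.isHermitian_conjTranspose_mul_self M).eigenvalues i)

/-- `eigDesc hM i` is the `i`-th largest eigenvalue (0-indexed) of a symmetric real matrix. -/
noncomputable def eigDesc {n : ℕ} {M : Matrix (Fin n) (Fin n) ℝ} (hM : M.IsHermitian) :
    Fin n → ℝ := descSort hM.eigenvalues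

section auxSort
open Polynomial Finset
variable {n : ℕ}

lemma perm_map_univ (e : Equiv.Perm (Fin n)) (f : Fin n → ℝ) :
    Multiset.map (fun i => f (e i)) Finset.univ.val = Multiset.map f Finset.univ.val := by
  have h : Multiset.map (fun i => f (e i)) Finset.univ.val
      = Multiset.map f (Multiset.map e Finset.univ.val) := by
    rw [Multiset.map_map]; rfl
  rw [h]
  congr 1
  have h2 := congrArg Finset.val (Finset.map_univ_equiv e)
  simpa [Finset.map_val] using h2

lemma descSort_eq_comp (f : Fin n → ℝ) :
    descSort f = fun i => f ((Fin.revPerm.trans (Tuple.sort f)) i) := rfl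

lemma descSort_multiset (f : Fin n → ℝ) :
    Multiset.map (descSort f) Finset.univ.val = Multiset.map f Finset.univ.val := by
  rw [descSort_eq_comp]; exact perm_map_univ _ f

lemma descSort_antitone (f : Fin n → ℝ) : Antitone (descSort f) := by
  intro i j hij
  exact Tuple.monotone_sort f (by simpa using Fin.rev_le_rev.mpr hij)

lemma monotone_unique {f g : Fin n → ℝ} (hf : Monotone f) (hg : Monotone g)
    (h : Multiset.map f Finset.univ.val = Multiset.map g Finset.univ.val) : f = g := by
  have hperm : List.Perm (List.ofFn f) (List.ofFn g) := by
    rw [← Multiset.coe_eq_coe]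
    simpa [List.ofFn_eq_map, Fin.univ_def, Finset.mk_coe] using h
  have hsf : (List.ofFn f).SortedLE := by
    rw [List.sortedLE_ofFn_iff]; exact hf
  have hsg : (List.ofFn g).SortedLE := by
    rw [List.sortedLE_ofFn_iff]; exact hg
  have h2 := List.Perm.eq_of_sortedLE hsf hsg hperm
  exact List.ofFn_injective h2

lemma antitone_unique {f g : Fin n → ℝ} (hf : Antitone f) (hg : Antitone g)
    (h : Multiset.map f Finset.univ.val = Multiset.map g Finset.univ.val) : f = g := by
  have hf' : Monotone (fun i => f (Fin.rev i)) :=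
    fun i j hij => hf (by simpa using Fin.rev_le_rev.mpr hij)
  have hg' : Monotone (fun i => g (Fin.rev i)) :=
    fun i j hij => hg (by simpa using Fin.rev_le_rev.mpr hij)
  have key := monotone_unique hf' hg' (by
    rw [show (fun i : Fin n => f i.rev) = (fun i => f (Fin.revPerm i)) from rfl,
      show (fun i : Fin n => g i.rev) = (fun i => g (Fin.revPerm i)) from rfl,
      perm_map_univ Fin.revPerm f, perm_map_univ Fin.revPerm g]; exact h)
  funext i
  have h3 := congrFun key (Fin.rev i)
  simpa using h3

lemma descSort_congr {f g : Fin n → ℝ}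
    (h : Multiset.map f Finset.univ.val = Multiset.map g Finset.univ.val) :
    descSort f = descSort g :=
  antitone_unique (descSort_antitone f) (descSort_antitone g)
    (by rw [descSort_multiset, descSort_multiset]; exact h)

lemma descSort_comp {φ : ℝ → ℝ} (hφ : Monotone φ) (f : Fin n → ℝ) :
    descSort (fun i => φ (f i)) = fun i => φ (descSort f i) := by
  apply antitone_unique (descSort_antitone _)
    (fun i j hij => hφ (descSort_antitone f hij))
  rw [descSort_multiset]
  have h : Multiset.map (fun i => φ (f i)) Finset.univ.val
      = Multiset.map φ (Multiset.map f Finset.univ.val) := by rw [Multiset.map_map]; rfl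
  rw [h, ← descSort_multiset f, Multiset.map_map]; rfl

lemma card_filter_perm (e : Equiv.Perm (Fin n)) (f : Fin n → ℝ) (p : ℝ → Prop) [DecidablePred p] :
    (Finset.univ.filter fun i => p (f (e i))).card = (Finset.univ.filter fun i => p (f i)).card := by
  apply Finset.card_bij (fun i _ => e i)
  · intro a ha; simpa using (Finset.mem_filter.mp ha).2
  · intro a _ b _ hab; exact e.injective hab
  · intro b hb
    exact ⟨e.symm b, Finset.mem_filter.mpr ⟨Finset.mem_univ _,
      by simpa using (Finset.mem_filter.mp hb).2⟩, by simp⟩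

lemma le_descSort {f : Fin n → ℝ} {v : ℝ} {i : Fin n}
    (h : i.1 + 1 ≤ (Finset.univ.filter fun k => v ≤ f k).card) : v ≤ descSort f i := by
  by_contra hlt
  push_neg at hlt
  have hcard : (Finset.univ.filter fun k => v ≤ descSort f k).card
      = (Finset.univ.filter fun k => v ≤ f k).card := by
    rw [descSort_eq_comp]
    exact card_filter_perm _ f (fun x => v ≤ x)
  have hsub : (Finset.univ.filter fun k => v ≤ descSort f k) ⊆ Finset.Iio i := by
    intro j hj
    rw [Finset.mem_Iio]
    by_contra hji
    push_neg at hji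
    exact absurd (le_trans (Finset.mem_filter.mp hj).2 (descSort_antitone f hji))
      (not_le.mpr hlt)
  have h4 := Finset.card_le_card hsub
  rw [hcard, Fin.card_Iio] at h4
  omega

lemma descSort_le {f : Fin n → ℝ} {v : ℝ} {i : Fin n}
    (h : n - i.1 ≤ (Finset.univ.filter fun k => f k ≤ v).card) : descSort f i ≤ v := by
  by_contra hlt
  push_neg at hlt
  have hcard : (Finset.univ.filter fun k => descSort f k ≤ v).card
      = (Finset.univ.filter fun k => f k ≤ v).card := by
    rw [descSort_eq_comp]
    exact card_filter_perm _ f (fun x => x ≤ v)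
  have hsub : (Finset.univ.filter fun k => descSort f k ≤ v) ⊆ Finset.Ioi i := by
    intro j hj
    rw [Finset.mem_Ioi]
    by_contra hji
    push_neg at hji
    exact absurd (le_trans (descSort_antitone f hji) (Finset.mem_filter.mp hj).2)
      (not_le.mpr hlt)
  have h4 := Finset.card_le_card hsub
  rw [hcard, Fin.card_Ioi] at h4
  have h5 : n - i.1 ≤ n - 1 - i.1 := le_trans h h4
  have hi := i.2
  omega

lemma charpoly_conj_units {U M V : Matrix (Fin n) (Fin n) ℝ} (hUV : U * V = 1) :
    (U * M * V).charpoly = M.charpoly := by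
  have hmap : (charmatrix (U * M * V)) =
      ((C : ℝ →+* ℝ[X]).mapMatrix U) * charmatrix M * ((C : ℝ →+* ℝ[X]).mapMatrix V) := by
    simp only [charmatrix, mul_sub, sub_mul, _root_.map_mul]
    congr 1
    have hc : ∀ N : Matrix (Fin n) (Fin n) ℝ[X],
        Matrix.scalar (Fin n) (X : ℝ[X]) * N = N * Matrix.scalar (Fin n) (X : ℝ[X]) :=
      fun N => (Matrix.scalar_commute (X : ℝ[X]) (fun r => Commute.all _ _) N).eq
    calc Matrix.scalar (Fin n) (X : ℝ[X])
        = Matrix.scalar (Fin n) (X : ℝ[X]) * ((C : ℝ →+* ℝ[X]).mapMatrix (U * V)) := by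
          rw [hUV]; simp
      _ = Matrix.scalar (Fin n) (X : ℝ[X]) * ((C : ℝ →+* ℝ[X]).mapMatrix U
            * (C : ℝ →+* ℝ[X]).mapMatrix V) := by rw [_root_.map_mul]
      _ = ((C : ℝ →+* ℝ[X]).mapMatrix U) * Matrix.scalar (Fin n) (X : ℝ[X])
            * ((C : ℝ →+* ℝ[X]).mapMatrix V) := by rw [← mul_assoc, hc]
  rw [Matrix.charpoly, hmap, det_mul, det_mul, Matrix.charpoly]
  have h1 : ((C : ℝ →+* ℝ[X]).mapMatrix U).det * ((C : ℝ →+* ℝ[X]).mapMatrix V).det = 1 := by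
    rw [mul_comm, ← det_mul, ← _root_.map_mul, mul_eq_one_comm.mp hUV]; simp
  calc ((C : ℝ →+* ℝ[X]).mapMatrix U).det * (charmatrix M).det
        * ((C : ℝ →+* ℝ[X]).mapMatrix V).det
      = (charmatrix M).det * (((C : ℝ →+* ℝ[X]).mapMatrix U).det
        * ((C : ℝ →+* ℝ[X]).mapMatrix V).det) := by ring
    _ = (charmatrix M).det := by rw [h1, mul_one]

lemma charpoly_diagonal' (d : Fin n → ℝ) :
    (Matrix.diagonal d).charpoly = ∏ i, (X - C (d i)) := by
  have h : charmatrix (Matrix.diagonal d) = Matrix.diagonal (fun i => X - C (d i)) := by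
    ext i j
    by_cases h : i = j
    · subst h; simp [charmatrix_apply_eq]
    · simp [charmatrix_apply_ne _ _ _ h, Matrix.diagonal_apply_ne _ h]
  rw [Matrix.charpoly, h, det_diagonal]

lemma charpoly_isHermitian {M : Matrix (Fin n) (Fin n) ℝ} (hM : M.IsHermitian) :
    M.charpoly = ∏ i, (X - C (hM.eigenvalues i)) := by
  have hsp := hM.spectral_theorem
  rw [RCLike.ofReal_real_eq_id] at hsp
  rw [Unitary.conjStarAlgAut_apply] at hsp
  have h1 : (hM.eigenvectorUnitary : Matrix (Fin n) (Fin n) ℝ)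
      * (star hM.eigenvectorUnitary : Matrix (Fin n) (Fin n) ℝ) = 1 := by
    exact_mod_cast hM.eigenvectorUnitary.2.2
  conv_lhs => rw [hsp]
  rw [charpoly_conj_units h1, show (id ∘ hM.eigenvalues) = hM.eigenvalues from rfl,
    charpoly_diagonal']

lemma charpoly_sq {M : Matrix (Fin n) (Fin n) ℝ} (hM : M.IsHermitian) :
    (M * M).charpoly = ∏ i, (X - C (hM.eigenvalues i ^ 2)) := by
  have hsp := hM.spectral_theorem
  rw [RCLike.ofReal_real_eq_id] at hsp
  rw [Unitary.conjStarAlgAut_apply] at hsp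
  set U : Matrix (Fin n) (Fin n) ℝ := (hM.eigenvectorUnitary : Matrix (Fin n) (Fin n) ℝ) with hU
  have h1 : U * star U = 1 := by exact_mod_cast hM.eigenvectorUnitary.2.2
  have h2 : star U * U = 1 := by exact_mod_cast hM.eigenvectorUnitary.2.1
  have hMM : M * M = U * Matrix.diagonal (fun i => hM.eigenvalues i ^ 2) * star U := by
    conv_lhs => rw [hsp]
    rw [show (id ∘ hM.eigenvalues) = hM.eigenvalues from rfl]
    rw [(by noncomm_ring : (U * Matrix.diagonal hM.eigenvalues * star U)
        * (U * Matrix.diagonal hM.eigenvalues * star U)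
      = U * Matrix.diagonal hM.eigenvalues * (star U * U)
        * Matrix.diagonal hM.eigenvalues * star U)]
    rw [h2, mul_one, mul_assoc U, mul_assoc U, diagonal_mul_diagonal]
    rw [show (fun i => hM.eigenvalues i * hM.eigenvalues i)
      = (fun i => hM.eigenvalues i ^ 2) from funext fun i => (sq _).symm]
    rw [← mul_assoc]
  rw [hMM, charpoly_conj_units h1, charpoly_diagonal']

lemma multiset_eig_sq {M : Matrix (Fin n) (Fin n) ℝ} (hM : M.IsHermitian)
    (hM2 : (M * M).IsHermitian) :
    Multiset.map hM2.eigenvalues Finset.univ.val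
      = Multiset.map (fun i => hM.eigenvalues i ^ 2) Finset.univ.val := by
  have h1 := charpoly_isHermitian hM2
  have h2 := charpoly_sq hM
  have key : (∏ i, (X - C (hM2.eigenvalues i)))
      = ∏ i, (X - C (hM.eigenvalues i ^ 2)) := by rw [← h1, h2]
  have r1 : (∏ i, (X - C (hM2.eigenvalues i))).roots
      = Multiset.map hM2.eigenvalues Finset.univ.val := by
    rw [Finset.prod_eq_multiset_prod,
      show (fun i => X - C (hM2.eigenvalues i)) = ((fun a => X - C a) ∘ hM2.eigenvalues) from rfl,
      ← Multiset.map_map]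
    exact Polynomial.roots_multiset_prod_X_sub_C _
  have r2 : (∏ i, (X - C (hM.eigenvalues i ^ 2))).roots
      = Multiset.map (fun i => hM.eigenvalues i ^ 2) Finset.univ.val := by
    rw [Finset.prod_eq_multiset_prod,
      show (fun i => X - C (hM.eigenvalues i ^ 2))
        = ((fun a => X - C a) ∘ (fun i => hM.eigenvalues i ^ 2)) from rfl,
      ← Multiset.map_map]
    exact Polynomial.roots_multiset_prod_X_sub_C _
  rw [← r1, ← r2, key]

lemma eig_congr {M N : Matrix (Fin n) (Fin n) ℝ} (h : M = N)
    (hM : M.IsHermitian) (hN : N.IsHermitian) : hM.eigenvalues = hN.eigenvalues := by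
  subst h; rfl

/-- `svalM` of a symmetric matrix is the decreasing rearrangement of `|eigenvalues|`. -/
lemma svalM_symm {M : Matrix (Fin n) (Fin n) ℝ} (hM : M.IsHermitian) :
    svalM M = descSort (fun k => |hM.eigenvalues k|) := by
  have hMt : Mᴴ * M = M * M := by
    rw [show Mᴴ = M from hM.eq]
  have hM2 : (M * M).IsHermitian := hMt ▸ (Matrix.isHermitian_conjTranspose_mul_self M)
  have he : (Matrix.isHermitian_conjTranspose_mul_self M).eigenvalues = hM2.eigenvalues :=
    eig_congr hMt _ _
  funext i
  show Real.sqrt (descSort (Matrix.isHermitian_conjTranspose_mul_self M).eigenvalues i) = _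
  rw [he, descSort_congr (multiset_eig_sq hM hM2)]
  have hsq : Monotone Real.sqrt := fun a b hab => Real.sqrt_le_sqrt hab
  have h3 := congrFun (descSort_comp hsq (fun i => hM.eigenvalues i ^ 2)) i
  rw [← h3]
  exact congrFun (congrArg descSort (funext fun k => Real.sqrt_sq_eq_abs _)) i

end auxSort

/-- For symmetric `A`, `B` with `A` positive semidefinite,
`|σ_i(B) − σ_i(A)| ≤ max_k |λ_k(B) − λ_k(A)|` for every `i`. -/
theorem stmt0 {V : ℕ} (A B : Matrix (Fin V) (Fin V) ℝ)
    (hA : A.PosSemidef) (hB : B.IsHermitian) :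
    ∀ i : Fin V, |svalM B i - svalM A i| ≤
      Finset.univ.sup' ⟨i, Finset.mem_univ i⟩
        (fun k => |eigDesc hB k - eigDesc hA.1 k|) := by
  intro i
  set a : Fin V → ℝ := eigDesc hA.1 with ha_def
  set b : Fin V → ℝ := eigDesc hB with hb_def
  set ε : ℝ := Finset.univ.sup' ⟨i, Finset.mem_univ i⟩ (fun k => |b k - a k|) with hε_def
  have hk : ∀ k, |b k - a k| ≤ ε := fun k => Finset.le_sup' (fun k => |b k - a k|) (Finset.mem_univ k)
  have hε0 : 0 ≤ ε := le_trans (abs_nonneg _) (hk i)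
  -- a is the decreasing sort of eigenvalues of A, nonneg and antitone
  have ha_anti : Antitone a := descSort_antitone _
  have hb_anti : Antitone b := descSort_antitone _
  have ha_nonneg : ∀ k, 0 ≤ a k := fun k => hA.eigenvalues_nonneg _
  -- svalM A = a
  have hsA : svalM A = a := by
    rw [svalM_symm hA.1, ha_def, eigDesc]
    exact congrArg descSort (funext fun k => abs_of_nonneg (hA.eigenvalues_nonneg k))
  -- svalM B = descSort |b|
  have hsB : svalM B = descSort (fun k => |b k|) := by
    rw [svalM_symm hB]
    apply descSort_congr
    have h1 : Multiset.map (fun k => |hB.eigenvalues k|) Finset.univ.val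
        = Multiset.map (fun x => |x|) (Multiset.map hB.eigenvalues Finset.univ.val) := by
      rw [Multiset.map_map]; rfl
    have h2 : Multiset.map (fun k => |b k|) Finset.univ.val
        = Multiset.map (fun x => |x|) (Multiset.map b Finset.univ.val) := by
      rw [Multiset.map_map]; rfl
    rw [h1, h2, hb_def, eigDesc, descSort_multiset]
  rw [hsA, hsB]
  set s : Fin V → ℝ := descSort (fun k => |b k|) with hs_def
  have hs_nonneg : 0 ≤ s i := abs_nonneg _
  rw [abs_sub_le_iff]
  constructor
  · -- s i - a i ≤ ε, i.e. s i ≤ a i + ε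
    have hup : s i ≤ a i + ε := by
      apply descSort_le
      have hsub : Finset.Ici i ⊆ Finset.univ.filter fun k => |b k| ≤ a i + ε := by
        intro k hkmem
        rw [Finset.mem_Ici] at hkmem
        refine Finset.mem_filter.mpr ⟨Finset.mem_univ _, abs_le.mpr ⟨?_, ?_⟩⟩
        · have h1 : a k - ε ≤ b k := by
            have := (abs_le.mp (hk k)).1; linarith
          have h2 : 0 ≤ a k := ha_nonneg k
          have h3 : 0 ≤ a i := ha_nonneg i
          linarith
        · have h1 : b k ≤ a k + ε := by
            have := (abs_le.mp (hk k)).2; linarith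
          have h2 : a k ≤ a i := ha_anti hkmem
          linarith
      have := Finset.card_le_card hsub
      rwa [Fin.card_Ici] at this
    linarith
  · -- a i - s i ≤ ε, i.e. a i - ε ≤ s i
    have hlow : a i - ε ≤ s i := by
      rcases le_or_gt (a i - ε) 0 with h0 | h0
      · linarith
      · apply le_descSort
        have hsub : Finset.Iic i ⊆ Finset.univ.filter fun k => a i - ε ≤ |b k| := by
          intro k hkmem
          rw [Finset.mem_Iic] at hkmem
          refine Finset.mem_filter.mpr ⟨Finset.mem_univ _, ?_⟩
          have h1 : a k - ε ≤ b k := by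
            have := (abs_le.mp (hk k)).1; linarith
          have h2 : a i ≤ a k := ha_anti hkmem
          have h3 : b k ≤ |b k| := le_abs_self _
          linarith
        have := Finset.card_le_card hsub
        rwa [Fin.card_Iic] at this
    linarith
end

section
/- Let U be a chi-square random variable with D degrees of freedom. Then for any x > 0, P(U ≥ D + 2√(Dx) + 2x) ≤ e^{−x} and P(U ≤ D − 2√(Dx)) ≤ e^{−x}. -/
open MeasureTheory ProbabilityTheory

/-- `log v ≥ (v² - 1)/(2v)` for `0 < v ≤ 1`. -/
lemma LM_log_lb {v : ℝ} (hv0 : 0 < v) (hv1 : v ≤ 1) :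
    (v ^ 2 - 1) / (2 * v) ≤ Real.log v := by
  set g : ℝ → ℝ := fun y => Real.log y - y / 2 + (2 * y)⁻¹ with hg
  have hderiv : ∀ y : ℝ, 0 < y → HasDerivAt g (y⁻¹ - 2⁻¹ + -2 / (2 * y) ^ 2) y := by
    intro y hy
    have h1 : HasDerivAt Real.log y⁻¹ y := Real.hasDerivAt_log hy.ne'
    have h2 : HasDerivAt (fun y : ℝ => y / 2) 2⁻¹ y := by
      simpa using (hasDerivAt_id y).div_const 2
    have h3 : HasDerivAt (fun y : ℝ => (2 * y)⁻¹) (-2 / (2 * y) ^ 2) y := by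
      have h : HasDerivAt (fun y : ℝ => 2 * y) 2 y := by
        simpa using (hasDerivAt_id y).const_mul 2
      exact h.inv (by positivity)
    exact (h1.sub h2).add h3
  have hanti : AntitoneOn g (Set.Icc v 1) := by
    apply antitoneOn_of_deriv_nonpos (convex_Icc v 1)
    · intro y hy
      have hy0 : 0 < y := lt_of_lt_of_le hv0 hy.1
      exact ((hderiv y hy0).differentiableAt).continuousAt.continuousWithinAt
    · intro y hy
      rw [interior_Icc] at hy
      have hy0 : 0 < y := lt_trans hv0 hy.1
      exact ((hderiv y hy0).differentiableAt).differentiableWithinAt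
    · intro y hy
      rw [interior_Icc] at hy
      have hy0 : 0 < y := lt_trans hv0 hy.1
      rw [(hderiv y hy0).deriv]
      have h : y⁻¹ - 2⁻¹ + -2 / (2 * y) ^ 2 = -((y - 1) ^ 2) / (2 * y ^ 2) := by
        field_simp
        ring
      rw [h]
      exact div_nonpos_of_nonpos_of_nonneg (neg_nonpos.mpr (sq_nonneg _)) (by positivity)
  have h01 : g 1 ≤ g v := hanti (Set.left_mem_Icc.mpr hv1) (Set.right_mem_Icc.mpr hv1) hv1
  have hg1 : g 1 = 0 := by
    norm_num [hg]
  have heq : (v ^ 2 - 1) / (2 * v) = v / 2 - (2 * v)⁻¹ := by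
    field_simp
  rw [heq]
  simp only [hg] at h01 hg1
  linarith

/-- `log (1+u) ≥ u - u²/2` for `0 ≤ u`. -/
lemma LM_log_one_add_lb {u : ℝ} (hu : 0 ≤ u) :
    u - u ^ 2 / 2 ≤ Real.log (1 + u) := by
  set g : ℝ → ℝ := fun y => Real.log (1 + y) - y + y ^ 2 / 2 with hg
  have hderiv : ∀ y : ℝ, 0 ≤ y → HasDerivAt g ((1 + y)⁻¹ - 1 + y) y := by
    intro y hy
    have h1 : HasDerivAt (fun y : ℝ => 1 + y) 1 y := by
      simpa using (hasDerivAt_id y).const_add 1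
    have h2 : HasDerivAt (fun y : ℝ => Real.log (1 + y)) ((1 + y)⁻¹) y := by
      simpa [div_eq_mul_inv] using h1.log (by positivity)
    have h3 : HasDerivAt (fun y : ℝ => y ^ 2 / 2) y y := by
      have := (hasDerivAt_pow 2 y).div_const 2
      simpa using this
    exact (h2.sub (hasDerivAt_id y)).add h3
  have hmono : MonotoneOn g (Set.Icc 0 u) := by
    apply monotoneOn_of_deriv_nonneg (convex_Icc 0 u)
    · intro y hy
      have hy0 : (0:ℝ) ≤ y := hy.1
      exact ((hderiv y hy0).differentiableAt).continuousAt.continuousWithinAt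
    · intro y hy
      rw [interior_Icc] at hy
      exact ((hderiv y hy.1.le).differentiableAt).differentiableWithinAt
    · intro y hy
      rw [interior_Icc] at hy
      rw [(hderiv y hy.1.le).deriv]
      have hy0 : (0:ℝ) < 1 + y := by linarith [hy.1]
      have h : (1 + y)⁻¹ - 1 + y = y ^ 2 / (1 + y) := by
        field_simp
        ring
      rw [h]
      positivity
  have h01 : g 0 ≤ g u := hmono (Set.left_mem_Icc.mpr hu) (Set.right_mem_Icc.mpr hu) hu
  have hg0 : g 0 = 0 := by simp [hg]
  simp only [hg] at h01 hg0
  linarith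

lemma LM_lintegral_exp_gamma {a r t : ℝ} (ha : 0 < a) (hr : 0 < r) (ht : t < r) :
    ∫⁻ y, ENNReal.ofReal (Real.exp (t * y)) ∂(gammaMeasure a r)
      = ENNReal.ofReal ((r / (r - t)) ^ a) := by
  have hrt : 0 < r - t := by linarith
  have hgm : Measurable fun y : ℝ => ENNReal.ofReal (Real.exp (t * y)) := by fun_prop
  have hfm : Measurable (gammaPDF a r) := (measurable_gammaPDFReal a r).ennreal_ofReal
  have hfm' : Measurable (gammaPDF a (r - t)) := (measurable_gammaPDFReal a (r - t)).ennreal_ofReal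
  rw [gammaMeasure, lintegral_withDensity_eq_lintegral_mul _ hfm hgm]
  have hkey : ∀ y : ℝ, (gammaPDF a r * fun y => ENNReal.ofReal (Real.exp (t * y))) y
      = ENNReal.ofReal ((r / (r - t)) ^ a) * gammaPDF a (r - t) y := by
    intro y
    simp only [Pi.mul_apply]
    rcases lt_or_ge y 0 with hy | hy
    · rw [gammaPDF_of_neg hy, gammaPDF_of_neg hy, zero_mul, mul_zero]
    · rw [gammaPDF_of_nonneg hy, gammaPDF_of_nonneg hy,
        ← ENNReal.ofReal_mul (by positivity), ← ENNReal.ofReal_mul (by positivity)]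
      congr 1
      have h1 : Real.exp (-(r * y)) * Real.exp (t * y) = Real.exp (-((r - t) * y)) := by
        rw [← Real.exp_add]
        ring_nf
      have h2 : (r / (r - t)) ^ a * (r - t) ^ a = r ^ a := by
        rw [← Real.mul_rpow (by positivity) hrt.le, div_mul_cancel₀ _ hrt.ne']
      rw [mul_assoc, h1, ← h2]
      ring
  rw [lintegral_congr hkey,
    lintegral_const_mul _ hfm',
    lintegral_gammaPDF_eq_one ha hrt, mul_one]

lemma LM_chernoff {Ω : Type*} [MeasurableSpace Ω] (μ : Measure Ω)
    (U : Ω → ℝ) (hU : Measurable U) {a r : ℝ} (ha : 0 < a) (hr : 0 < r)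
    (hlaw : Measure.map U μ = gammaMeasure a r) {t : ℝ} (ht : t < r)
    (S : Set Ω) (c : ℝ) (hS : ∀ ω ∈ S, c ≤ t * U ω) :
    μ S ≤ ENNReal.ofReal ((r / (r - t)) ^ a * Real.exp (-c)) := by
  have hmeas : Measurable fun ω => ENNReal.ofReal (Real.exp (t * U ω)) :=
    (Real.measurable_exp.comp (hU.const_mul t)).ennreal_ofReal
  have hmono : μ S ≤
      μ {ω | ENNReal.ofReal (Real.exp c) ≤ ENNReal.ofReal (Real.exp (t * U ω))} :=
    measure_mono fun ω hω =>
      ENNReal.ofReal_le_ofReal (Real.exp_le_exp.mpr (hS ω hω))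
  have hmarkov := mul_meas_ge_le_lintegral₀ (μ := μ) hmeas.aemeasurable (ENNReal.ofReal (Real.exp c))
  have hint : ∫⁻ ω, ENNReal.ofReal (Real.exp (t * U ω)) ∂μ
      = ENNReal.ofReal ((r / (r - t)) ^ a) := by
    rw [← LM_lintegral_exp_gamma ha hr ht, ← hlaw,
      lintegral_map (by fun_prop) hU]
  have key : ENNReal.ofReal (Real.exp c) * μ S ≤ ENNReal.ofReal ((r / (r - t)) ^ a) :=
    le_trans (mul_le_mul_right hmono _) (hint ▸ hmarkov)
  have hrw : (r / (r - t)) ^ a * Real.exp (-c) = (r / (r - t)) ^ a / Real.exp c := by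
    rw [Real.exp_neg]
    ring
  rw [hrw, ENNReal.ofReal_div_of_pos (Real.exp_pos c),
    ENNReal.le_div_iff_mul_le (Or.inl (ENNReal.ofReal_pos.mpr (Real.exp_pos c)).ne')
      (Or.inl ENNReal.ofReal_ne_top), mul_comm]
  exact key

/-- Laurent–Massart: If `U` is a chi-square random variable with `D`
degrees of freedom (i.e. its law is `Gamma(D/2, rate 1/2)`), then for any `x > 0`,
`P(U ≥ D + 2√(Dx) + 2x) ≤ e^{−x}` and `P(U ≤ D − 2√(Dx)) ≤ e^{−x}`. -/
theorem stmt7 {Ω : Type*} [MeasurableSpace Ω] (μ : Measure Ω) [IsProbabilityMeasure μ]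
    (D : ℕ) (hD : 0 < D) (U : Ω → ℝ) (hU : Measurable U)
    (hlaw : Measure.map U μ = gammaMeasure ((D : ℝ) / 2) (1 / 2))
    (x : ℝ) (hx : 0 < x) :
    μ {ω | (D : ℝ) + 2 * Real.sqrt (D * x) + 2 * x ≤ U ω} ≤
      ENNReal.ofReal (Real.exp (-x)) ∧
    μ {ω | U ω ≤ (D : ℝ) - 2 * Real.sqrt (D * x)} ≤
      ENNReal.ofReal (Real.exp (-x)) := by
  have hDpos : (0:ℝ) < D := Nat.cast_pos.mpr hD
  set p : ℝ := Real.sqrt D with hpdef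
  set q : ℝ := Real.sqrt x with hqdef
  have hp : 0 < p := Real.sqrt_pos.mpr hDpos
  have hq : 0 < q := Real.sqrt_pos.mpr hx
  have hp2 : p ^ 2 = (D : ℝ) := Real.sq_sqrt hDpos.le
  have hq2 : q ^ 2 = x := Real.sq_sqrt hx.le
  have hpq : Real.sqrt ((D : ℝ) * x) = p * q := Real.sqrt_mul hDpos.le x
  have ha : (0:ℝ) < (D : ℝ) / 2 := by positivity
  constructor
  · -- upper tail
    set t : ℝ := q / (p + 2 * q) with htdef
    have ht0 : 0 < t := by positivity
    have ht : t < 1 / 2 := by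
      rw [htdef, div_lt_div_iff₀ (by positivity) (by norm_num)]
      linarith
    set c : ℝ := t * ((D : ℝ) + 2 * Real.sqrt (D * x) + 2 * x) with hcdef
    refine le_trans (LM_chernoff μ U hU ha one_half_pos hlaw ht _ c
      (fun ω hω => mul_le_mul_of_nonneg_left hω ht0.le)) ?_
    apply ENNReal.ofReal_le_ofReal
    have hv0 : 0 < p / (p + 2 * q) := by positivity
    have hv1 : p / (p + 2 * q) ≤ 1 := by
      rw [div_le_one (by positivity)]
      linarith
    have hratio2 : (1:ℝ) / 2 / (1 / 2 - t) = (p / (p + 2 * q))⁻¹ := by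
      rw [htdef]
      rw [show (1:ℝ) / 2 - q / (p + 2 * q) = p / (2 * (p + 2 * q)) by field_simp; ring]
      field_simp
    rw [hratio2, Real.rpow_def_of_pos (by positivity), Real.log_inv, ← Real.exp_add,
      Real.exp_le_exp]
    have hlog := LM_log_lb hv0 hv1
    have hle : -Real.log (p / (p + 2 * q)) * ((D : ℝ) / 2)
        ≤ (1 - (p / (p + 2 * q)) ^ 2) / (2 * (p / (p + 2 * q))) * ((D : ℝ) / 2) := by
      apply mul_le_mul_of_nonneg_right _ (by positivity)
      have h : (1 - (p / (p + 2 * q)) ^ 2) / (2 * (p / (p + 2 * q)))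
          = -(((p / (p + 2 * q)) ^ 2 - 1) / (2 * (p / (p + 2 * q)))) := by ring
      rw [h]
      linarith
    have heq : (1 - (p / (p + 2 * q)) ^ 2) / (2 * (p / (p + 2 * q))) * ((D : ℝ) / 2) - c
        = -x := by
      rw [hcdef, htdef, hpq, ← hp2, ← hq2]
      field_simp
      ring
    linarith
  · -- lower tail
    set t : ℝ := -(q / p) with htdef
    have ht : t < 1 / 2 := by
      rw [htdef]
      have h : 0 < q / p := by positivity
      linarith
    set c : ℝ := t * ((D : ℝ) - 2 * Real.sqrt (D * x)) with hcdef
    refine le_trans (LM_chernoff μ U hU ha one_half_pos hlaw ht _ c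
      (fun ω hω => mul_le_mul_of_nonpos_left hω (by rw [htdef]; simp; positivity))) ?_
    apply ENNReal.ofReal_le_ofReal
    have hratio : (1:ℝ) / 2 / (1 / 2 - t) = p / (p + 2 * q) := by
      rw [htdef]
      rw [show (1:ℝ) / 2 - -(q / p) = (p + 2 * q) / (2 * p) by field_simp; ring]
      field_simp
    rw [hratio, Real.rpow_def_of_pos (by positivity), ← Real.exp_add, Real.exp_le_exp]
    have hinv : p / (p + 2 * q) = (1 + 2 * q / p)⁻¹ := by
      rw [show (1:ℝ) + 2 * q / p = (p + 2 * q) / p by field_simp, inv_div]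
    have hu : (0:ℝ) ≤ 2 * q / p := by positivity
    have hlog := LM_log_one_add_lb hu
    have hle : Real.log (p / (p + 2 * q)) ≤ -(2 * q / p - (2 * q / p) ^ 2 / 2) := by
      rw [hinv, Real.log_inv]
      linarith
    have hle2 : Real.log (p / (p + 2 * q)) * ((D : ℝ) / 2)
        ≤ -(2 * q / p - (2 * q / p) ^ 2 / 2) * ((D : ℝ) / 2) :=
      mul_le_mul_of_nonneg_right hle (by positivity)
    have heq : -(2 * q / p - (2 * q / p) ^ 2 / 2) * ((D : ℝ) / 2) - c = -x := by
      rw [hcdef, htdef, hpq, ← hp2, ← hq2]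
      field_simp
      ring
    linarith
end

section
/- Let y_1, …, y_n be i.i.d. Gamma(α, 1) random variables, x_i = y_i / Σ_j y_j. For δ_1, δ_2 ∈ (0,1) with δ_2 > e^{−2α}, with probability at least 1 − δ_1 − δ_2, min_i x_i ≥ (1/n)·(α − √(2α log(n/δ_1))) / (α + √(2α log(1/δ_2)/n)). -/
open MeasureTheory ProbabilityTheory
open scoped ENNReal NNReal


section Stmt13Helpers

open MeasureTheory ProbabilityTheory Real Set
open scoped ENNReal NNReal

/-- second order log bound -/
lemma log_one_sub_le {x : ℝ} (hx0 : 0 ≤ x) (hx1 : x < 1) :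
    Real.log (1 - x) ≤ -x - x ^ 2 / 2 := by
  have h1x : (0:ℝ) < 1 - x := by linarith
  rw [Real.log_le_iff_le_exp h1x]
  -- step 1 : (1-x) * exp x ≤ 1 - x^2/2
  set g : ℝ → ℝ := fun t => 1 - t ^ 2 / 2 - (1 - t) * Real.exp t with hg
  have hderiv : ∀ t : ℝ, HasDerivAt g (t * (Real.exp t - 1)) t := by
    intro t
    have h1 : HasDerivAt (fun t : ℝ => 1 - t ^ 2 / 2) (-t) t := by
      have := ((hasDerivAt_pow 2 t).div_const 2).const_sub 1
      simpa using this.congr_deriv (by ring)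
    have h2 : HasDerivAt (fun t : ℝ => (1 - t) * Real.exp t)
        ((-1) * Real.exp t + (1 - t) * Real.exp t) t :=
      ((hasDerivAt_id t).const_sub 1).mul (Real.hasDerivAt_exp t)
    exact (h1.sub h2).congr_deriv (by ring)
  have hmono : Monotone g := by
    apply monotone_of_deriv_nonneg
    · exact fun t => (hderiv t).differentiableAt
    · intro t
      rw [(hderiv t).deriv]
      rcases le_or_gt 0 t with ht | ht
      · have : 1 ≤ Real.exp t := Real.one_le_exp ht
        nlinarith
      · have : Real.exp t < 1 := Real.exp_lt_one_iff.mpr ht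
        nlinarith
  have hg0 : g 0 = 0 := by simp [hg]
  have hgx : 0 ≤ g x := by
    have := hmono hx0
    rwa [hg0] at this
  have step1 : (1 - x) * Real.exp x ≤ 1 - x ^ 2 / 2 := by
    simp only [hg] at hgx; linarith
  have step2 : 1 - x ^ 2 / 2 ≤ Real.exp (-(x ^ 2 / 2)) := by
    have := Real.add_one_le_exp (-(x ^ 2 / 2)); linarith
  have hexp : (0:ℝ) < Real.exp x := Real.exp_pos x
  have : (1 - x) * Real.exp x ≤ Real.exp (-(x ^ 2 / 2)) := step1.trans step2
  have h3 : (1 - x) ≤ Real.exp (-(x ^ 2 / 2)) / Real.exp x := by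
    rw [le_div_iff₀ hexp]; exact this
  calc (1 - x) ≤ Real.exp (-(x ^ 2 / 2)) / Real.exp x := h3
    _ = Real.exp (-x - x ^ 2 / 2) := by rw [← Real.exp_sub]; ring_nf

lemma rpow_exp_integrableOn {α r : ℝ} (hα : 0 < α) (hr : 0 < r) :
    IntegrableOn (fun x : ℝ => x ^ (α - 1) * Real.exp (-(r * x))) (Set.Ioi 0) := by
  have h0 : IntegrableOn (fun x : ℝ => Real.exp (-x) * x ^ (α - 1)) (Set.Ioi 0) :=
    Real.GammaIntegral_convergent hα
  have h1 : IntegrableOn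
      (fun x : ℝ => Real.exp (-(r * x)) * (r * x) ^ (α - 1)) (Set.Ioi 0) := by
    have := (integrableOn_Ioi_comp_mul_left_iff
      (fun x : ℝ => Real.exp (-x) * x ^ (α - 1)) 0 hr).2 (by simpa using h0)
    simpa using this
  have h2 := h1.const_mul ((r : ℝ) ^ (α - 1))⁻¹
  apply IntegrableOn.congr_fun h2 ?_ measurableSet_Ioi
  intro x hx
  have hx0 : (0:ℝ) < x := hx
  simp only []
  rw [Real.mul_rpow hr.le hx0.le]
  field_simp [(Real.rpow_pos_of_pos hr (α - 1)).ne']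

lemma gamma_exp_eq_indicator {α s : ℝ} (hα : 0 < α) :
    (fun x : ℝ => Real.exp (s * x) * gammaPDFReal α 1 x) =
      Set.indicator (Set.Ici 0)
        (fun x : ℝ => (Real.Gamma α)⁻¹ * (x ^ (α - 1) * Real.exp (-((1 - s) * x)))) := by
  funext x
  rcases le_or_gt 0 x with hx | hx
  · rw [Set.indicator_of_mem (Set.mem_Ici.mpr hx)]
    rw [gammaPDFReal, if_pos hx]
    rw [Real.one_rpow]
    rw [show -((1 - s) * x) = s * x + -(1 * x) by ring, Real.exp_add]
    ring
  · rw [Set.indicator_of_notMem (by simpa using hx)]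
    rw [gammaPDFReal, if_neg (by linarith)]
    ring

lemma gamma_exp_integrable {α s : ℝ} (hα : 0 < α) (hs : s < 1) :
    Integrable (fun x : ℝ => Real.exp (s * x)) (gammaMeasure α 1) := by
  have hr : (0:ℝ) < 1 - s := by linarith
  have hpdf_meas : Measurable (gammaPDF α 1) :=
    (measurable_gammaPDFReal α 1).ennreal_ofReal
  rw [gammaMeasure, integrable_withDensity_iff hpdf_meas
    (ae_of_all _ fun x => ENNReal.ofReal_lt_top)]
  have htr : ∀ x : ℝ, (gammaPDF α 1 x).toReal = gammaPDFReal α 1 x := fun x =>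
    ENNReal.toReal_ofReal (gammaPDFReal_nonneg hα one_pos x)
  simp only [htr]
  rw [gamma_exp_eq_indicator hα]
  rw [integrable_indicator_iff measurableSet_Ici]
  rw [IntegrableOn, Measure.restrict_congr_set Ioi_ae_eq_Ici.symm]
  exact ((rpow_exp_integrableOn hα hr).const_mul _)

lemma gamma_exp_integral {α s : ℝ} (hα : 0 < α) (hs : s < 1) :
    ∫ x, Real.exp (s * x) ∂(gammaMeasure α 1) = (1 - s) ^ (-α) := by
  have hr : (0:ℝ) < 1 - s := by linarith
  have hpdf_meas : Measurable (gammaPDF α 1) :=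
    (measurable_gammaPDFReal α 1).ennreal_ofReal
  have hFint : Integrable (fun x : ℝ => Real.exp (s * x) * gammaPDFReal α 1 x) volume := by
    rw [gamma_exp_eq_indicator hα, integrable_indicator_iff measurableSet_Ici,
      IntegrableOn, Measure.restrict_congr_set Ioi_ae_eq_Ici.symm]
    exact ((rpow_exp_integrableOn hα hr).const_mul _)
  have hmeas_exp : Measurable fun x : ℝ => ENNReal.ofReal (Real.exp (s * x)) := by fun_prop
  have hsm : AEStronglyMeasurable (fun x : ℝ => Real.exp (s * x)) (gammaMeasure α 1) :=
    (Measurable.aestronglyMeasurable (by fun_prop))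
  rw [integral_eq_lintegral_of_nonneg_ae (ae_of_all _ fun x => (Real.exp_pos _).le) hsm]
  rw [gammaMeasure, lintegral_withDensity_eq_lintegral_mul _ hpdf_meas hmeas_exp]
  have hprod : ∀ x : ℝ, (gammaPDF α 1 * fun x => ENNReal.ofReal (Real.exp (s * x))) x =
      ENNReal.ofReal (Real.exp (s * x) * gammaPDFReal α 1 x) := by
    intro x
    simp only [Pi.mul_apply, gammaPDF]
    rw [← ENNReal.ofReal_mul (gammaPDFReal_nonneg hα one_pos x), mul_comm]
  rw [lintegral_congr hprod]
  rw [← MeasureTheory.ofReal_integral_eq_lintegral_ofReal hFint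
    (ae_of_all _ fun x => mul_nonneg (Real.exp_pos _).le (gammaPDFReal_nonneg hα one_pos x))]
  rw [ENNReal.toReal_ofReal (integral_nonneg fun x =>
    mul_nonneg (Real.exp_pos _).le (gammaPDFReal_nonneg hα one_pos x))]
  rw [gamma_exp_eq_indicator hα, integral_indicator measurableSet_Ici,
    integral_Ici_eq_integral_Ioi, integral_const_mul,
    integral_rpow_mul_exp_neg_mul_Ioi hα hr]
  rw [one_div, Real.inv_rpow hr.le, ← Real.rpow_neg hr.le]
  field_simp [(Real.Gamma_pos_of_pos hα).ne']

lemma gamma_Iic_zero {α : ℝ} : gammaMeasure α 1 (Set.Iic 0) = 0 := by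
  rw [gammaMeasure, withDensity_apply _ measurableSet_Iic]
  rw [lintegral_Iic_eq_lintegral_Iio_add_Icc _ le_rfl]
  rw [lintegral_gammaPDF_of_nonpos le_rfl, Set.Icc_self]
  rw [setLIntegral_measure_zero _ _ (by simp)]
  simp

lemma chernoff_numeric (n : ℕ) (hn : 0 < n) (α L₁ δ₁ S : ℝ)
    (hα : 0 < α) (hδ₁0 : 0 < δ₁) (hL₁ : 0 < L₁) (hL₁def : L₁ = Real.log (n / δ₁))
    (ha : Real.sqrt (2 * α * L₁) < α) (hSn : (n : ℝ) * α < S) :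
    (1 + Real.sqrt (2 * α * L₁) / (α - Real.sqrt (2 * α * L₁))) ^ (-α) *
      ((1 - Real.sqrt (2 * α * L₁) / (S - (α - Real.sqrt (2 * α * L₁)))) ^ (-α)) ^ (n - 1) ≤
    δ₁ / n := by
  have hn1 : (1:ℝ) ≤ n := Nat.one_le_cast.mpr hn
  set t₁ := Real.sqrt (2 * α * L₁) with ht₁def
  have ht₁pos : 0 < t₁ := Real.sqrt_pos.mpr (by positivity)
  have ht₁sq : t₁ ^ 2 = 2 * α * L₁ := Real.sq_sqrt (by positivity)
  set a := α - t₁ with hadef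
  have ha0 : 0 < a := by simp only [hadef]; linarith
  have hαn : α ≤ (n:ℝ) * α := by nlinarith
  have hαS : α < S := lt_of_le_of_lt hαn hSn
  have hSa : 0 < S - a := by simp only [hadef]; linarith
  have hSα : 0 < S - α := by linarith
  set lam := t₁ / a with hlamdef
  have hlam : 0 < lam := div_pos ht₁pos ha0
  set z := t₁ / (S - a) with hzdef
  have hz0 : 0 < z := div_pos ht₁pos hSa
  have hz1 : z < 1 := by
    rw [hzdef, div_lt_one hSa]
    simp only [hadef]; linarith
  have h1z : 0 < 1 - z := by linarith
  -- rewrite as exponentials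
  have e1 : (1 + lam) ^ (-α) = Real.exp (-α * Real.log (1 + lam)) := by
    rw [Real.rpow_def_of_pos (by linarith)]
    ring_nf
  have e2 : ((1 - z) ^ (-α)) ^ (n - 1) = Real.exp (((n : ℝ) - 1) * (-α * Real.log (1 - z))) := by
    rw [Real.rpow_def_of_pos h1z]
    rw [show ((n:ℝ) - 1) = ((n - 1 : ℕ) : ℝ) by
      rw [Nat.cast_sub hn]; simp]
    rw [Real.exp_nat_mul]
    ring_nf
  rw [e1, e2, ← Real.exp_add]
  -- part 1
  have hpart1 : -α * Real.log (1 + lam) ≤ -L₁ - t₁ := by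
    have h1lam : 1 + lam = α / a := by
      rw [hlamdef]; field_simp [hadef]; linarith
    have halphaa : a / α = 1 - t₁ / α := by
      rw [hadef]; field_simp
    have hx0 : 0 ≤ t₁ / α := by positivity
    have hx1 : t₁ / α < 1 := (div_lt_one hα).mpr (by linarith)
    have hlog := log_one_sub_le hx0 hx1
    have hloginv : Real.log (1 + lam) = -Real.log (1 - t₁ / α) := by
      rw [h1lam, ← halphaa, ← Real.log_inv, inv_div]
    rw [hloginv]
    have : α * Real.log (1 - t₁ / α) ≤ α * (-(t₁ / α) - (t₁ / α) ^ 2 / 2) :=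
      mul_le_mul_of_nonneg_left hlog hα.le
    have heq : α * (-(t₁ / α) - (t₁ / α) ^ 2 / 2) = -t₁ - t₁ ^ 2 / (2 * α) := by
      field_simp
    have heq2 : t₁ ^ 2 / (2 * α) = L₁ := by
      rw [ht₁sq]; field_simp
    nlinarith [this]
  -- part 2
  have hpart2 : ((n : ℝ) - 1) * (-α * Real.log (1 - z)) ≤ t₁ := by
    have hlog2 : -Real.log (1 - z) ≤ z / (1 - z) := by
      have h := Real.log_le_sub_one_of_pos (inv_pos.mpr h1z)
      rw [Real.log_inv] at h
      have : (1 - z)⁻¹ - 1 = z / (1 - z) := by field_simp; ring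
      linarith
    have hzr : z * (S - α) = t₁ * (1 - z) := by
      have h2 : S - α = (S - a) - t₁ := by rw [hadef]; ring
      rw [hzdef, h2]
      field_simp
    have hzratio : z / (1 - z) = t₁ / (S - α) := by
      rw [div_eq_div_iff h1z.ne' hSα.ne']; linarith
    have hb : -α * Real.log (1 - z) ≤ α * (t₁ / (S - α)) := by
      have := mul_le_mul_of_nonneg_left hlog2 hα.le
      rw [hzratio] at this
      linarith [this]
    have hn1' : (0:ℝ) ≤ (n : ℝ) - 1 := by linarith
    calc ((n : ℝ) - 1) * (-α * Real.log (1 - z))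
        ≤ ((n : ℝ) - 1) * (α * (t₁ / (S - α))) := mul_le_mul_of_nonneg_left hb hn1'
      _ = (((n:ℝ) - 1) * α * t₁) / (S - α) := by ring
      _ ≤ t₁ := by
          rw [div_le_iff₀ hSα]
          nlinarith
  have hsum : -α * Real.log (1 + lam) + ((n : ℝ) - 1) * (-α * Real.log (1 - z)) ≤ -L₁ := by
    linarith
  calc Real.exp (-α * Real.log (1 + lam) + ((n : ℝ) - 1) * (-α * Real.log (1 - z)))
      ≤ Real.exp (-L₁) := Real.exp_le_exp.mpr hsum
    _ = δ₁ / n := by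
        rw [hL₁def, ← Real.log_inv, inv_div, Real.exp_log (by positivity)]

end Stmt13Helpers

/-- Let `y_1, …, y_n` be i.i.d. `Gamma(α, 1)` with `α > 0` and
`x_i = y_i / Σ_j y_j`. For `δ₁, δ₂ ∈ (0,1)` with `δ₂ > e^{−2α}`, with probability at
least `1 − δ₁ − δ₂`,
`min_i x_i ≥ (1/n)·(α − √(2α log(n/δ₁))) / (α + √(2α log(1/δ₂)/n))`. -/
theorem stmt13 {Ω : Type*} [MeasurableSpace Ω] (μ : Measure Ω) [IsProbabilityMeasure μ]
    (n : ℕ) (hn : 0 < n) (α : ℝ) (hα : 0 < α)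
    (y : Fin n → Ω → ℝ) (hy : ∀ i, Measurable (y i))
    (hindep : iIndepFun y μ)
    (hlaw : ∀ i, Measure.map (y i) μ = gammaMeasure α 1)
    (δ₁ δ₂ : ℝ) (hδ₁ : δ₁ ∈ Set.Ioo (0 : ℝ) 1) (hδ₂ : δ₂ ∈ Set.Ioo (0 : ℝ) 1)
    (hδ₂' : Real.exp (-(2 * α)) < δ₂) :
    ENNReal.ofReal (1 - δ₁ - δ₂) ≤
      μ {ω | ∀ i,
        (1 / (n : ℝ)) * ((α - Real.sqrt (2 * α * Real.log (n / δ₁))) /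
          (α + Real.sqrt (2 * α * Real.log (1 / δ₂) / n))) ≤
        y i ω / (∑ j, y j ω)} := by
  obtain ⟨hδ₁0, hδ₁1⟩ := hδ₁
  obtain ⟨hδ₂0, hδ₂1⟩ := hδ₂
  have hn1 : (1:ℝ) ≤ n := Nat.one_le_cast.mpr hn
  have hn0 : (0:ℝ) < n := by linarith
  -- trivial case
  rcases le_or_gt (1 - δ₁ - δ₂) 0 with hcase | hcase
  · rw [ENNReal.ofReal_of_nonpos hcase]; exact zero_le
  set L₁ := Real.log (n / δ₁) with hL₁def
  have hL₁ : 0 < L₁ := Real.log_pos (by rw [lt_div_iff₀ hδ₁0]; linarith)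
  set t₁ := Real.sqrt (2 * α * L₁) with ht₁def
  have ht₁pos : 0 < t₁ := Real.sqrt_pos.mpr (by positivity)
  have hL₂ : 0 < Real.log (1 / δ₂) := Real.log_pos (by rw [lt_div_iff₀ hδ₂0]; linarith)
  set D := α + Real.sqrt (2 * α * Real.log (1 / δ₂) / n) with hDdef
  have hsq₂ : 0 < Real.sqrt (2 * α * Real.log (1 / δ₂) / n) :=
    Real.sqrt_pos.mpr (by positivity)
  have hαD : α < D := by rw [hDdef]; linarith
  have hD : 0 < D := hα.trans hαD
  set T := {ω : Ω | ∀ i, (1 / (n : ℝ)) * ((α - t₁) / D) ≤ y i ω / (∑ j, y j ω)} with hTdef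
  -- null bad set
  set bad := {ω : Ω | ∃ j, y j ω ≤ 0} with hbaddef
  have hbadnull : μ bad = 0 := by
    have : bad = ⋃ j, y j ⁻¹' Set.Iic 0 := by
      ext ω; simp [hbaddef, Set.mem_iUnion]
    rw [this]
    refine measure_iUnion_null fun j => ?_
    rw [← Measure.map_apply (hy j) measurableSet_Iic, hlaw j]
    exact gamma_Iic_zero
  have hbadcompl : (1:ℝ≥0∞) ≤ μ badᶜ := by
    have h := measure_union_le (μ := μ) badᶜ bad
    rw [Set.compl_union_self, measure_univ, hbadnull, add_zero] at h
    exact h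
  -- sum positivity on good set
  have hsumpos : ∀ ω : Ω, ω ∈ badᶜ → 0 < ∑ j, y j ω := by
    intro ω hω
    simp only [hbaddef, Set.mem_compl_iff, Set.mem_setOf_eq, not_exists, not_le] at hω
    exact Finset.sum_pos (fun j _ => hω j) (Finset.univ_nonempty_iff.mpr ⟨⟨0, hn⟩⟩)
  have hypos : ∀ ω : Ω, ω ∈ badᶜ → ∀ j, 0 < y j ω := by
    intro ω hω
    simp only [hbaddef, Set.mem_compl_iff, Set.mem_setOf_eq, not_exists, not_le] at hω
    exact hω
  rcases le_or_gt (α - t₁) 0 with hB | haa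
  -- degenerate case : bound is nonpositive
  · have hBle : (1 / (n : ℝ)) * ((α - t₁) / D) ≤ 0 :=
      mul_nonpos_of_nonneg_of_nonpos (by positivity) (div_nonpos_of_nonpos_of_nonneg hB hD.le)
    have hsub : badᶜ ⊆ T := by
      intro ω hω i
      exact hBle.trans (div_pos (hypos ω hω i) (hsumpos ω hω)).le
    calc ENNReal.ofReal (1 - δ₁ - δ₂) ≤ 1 := ENNReal.ofReal_le_one.mpr (by linarith)
      _ ≤ μ badᶜ := hbadcompl
      _ ≤ μ T := measure_mono hsub
  -- main case
  · set a := α - t₁ with hadef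
    set S := (n : ℝ) * D with hSdef
    have hSn : (n : ℝ) * α < S := by
      rw [hSdef]
      exact mul_lt_mul_of_pos_left hαD hn0
    have hαn : α ≤ (n:ℝ) * α := by nlinarith
    have hαS : α < S := lt_of_le_of_lt hαn hSn
    have haS : a < S := by rw [hadef]; linarith
    have hSa : 0 < S - a := by linarith
    set lam := t₁ / a with hlamdef
    have hlam : 0 < lam := div_pos ht₁pos haa
    set c := a / (S - a) with hcdef
    have hc : 0 < c := div_pos haa hSa
    have hzc : lam * c = t₁ / (S - a) := by
      rw [hlamdef, hcdef]
      field_simp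
    have hz1 : lam * c < 1 := by
      rw [hzc, div_lt_one hSa, hadef]; linarith
    have hBeq : (1 / (n : ℝ)) * (a / D) = a / S := by
      rw [hSdef]; field_simp
    clear_value L₁ t₁ D a S lam c
    -- per-index Chernoff bound
    have hkey : ∀ i : Fin n,
        μ {ω : Ω | 0 ≤ ∑ j, (if j = i then -lam else lam * c) * y j ω} ≤
          ENNReal.ofReal (δ₁ / n) := by
      intro i
      set w : Fin n → ℝ := fun j => if j = i then -lam else lam * c with hwdef
      have hw1 : ∀ j, w j < 1 := by
        intro j
        rw [hwdef]
        by_cases h : j = i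
        · simp [h]; linarith
        · simp [h]; exact hz1
      set X : Fin n → Ω → ℝ := fun j ω => w j * y j ω with hXdef
      have hXmeas : ∀ j, Measurable (X j) := fun j => (hy j).const_mul _
      have hXindep : iIndepFun X μ :=
        hindep.comp (fun j x => w j * x) (fun j => measurable_const_mul _)
      have hint : ∀ j : Fin n, ∀ s : ℝ, s < 1 →
          Integrable (fun ω => Real.exp (s * y j ω)) μ := by
        intro j s hs
        have h0 := gamma_exp_integrable hα hs
        rw [← hlaw j] at h0
        exact (integrable_map_measure (Measurable.aestronglyMeasurable (by fun_prop))
          (hy j).aemeasurable).1 h0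
      have hmgfy : ∀ j : Fin n, ∀ s : ℝ, s < 1 →
          mgf (y j) μ s = (1 - s) ^ (-α) := by
        intro j s hs
        rw [mgf, ← gamma_exp_integral hα hs, ← hlaw j,
          integral_map (hy j).aemeasurable (Measurable.aestronglyMeasurable (by fun_prop))]
      have hintsum : Integrable (fun ω => Real.exp (1 * (∑ j, X j) ω)) μ := by
        refine hXindep.integrable_exp_mul_sum hXmeas fun j _ => ?_
        have := hint j (w j) (hw1 j)
        simpa [hXdef, one_mul] using this
      have hchern := measure_ge_le_exp_mul_mgf (μ := μ) (X := ∑ j, X j) 0 zero_le_one hintsum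
      have hmgfsum : mgf (∑ j, X j) μ 1 = ∏ j, mgf (X j) μ 1 :=
        hXindep.mgf_sum hXmeas Finset.univ
      have hmgfX : ∀ j, mgf (X j) μ 1 = (1 - w j) ^ (-α) := by
        intro j
        have h1 : mgf (X j) μ 1 = mgf (y j) μ (w j) := by
          unfold mgf
          congr 1 with ω
          rw [hXdef]
          ring_nf
        rw [h1, hmgfy j (w j) (hw1 j)]
      have hprod : ∏ j, mgf (X j) μ 1 = (1 + lam) ^ (-α) * ((1 - lam * c) ^ (-α)) ^ (n - 1) := by
        rw [Finset.prod_congr rfl (fun j _ => hmgfX j)]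
        rw [← Finset.mul_prod_erase Finset.univ _ (Finset.mem_univ i)]
        congr 1
        · rw [hwdef]; simp [sub_neg_eq_add]
        · rw [Finset.prod_congr rfl (fun j hj => ?_), Finset.prod_const,
            Finset.card_erase_of_mem (Finset.mem_univ i), Finset.card_univ, Fintype.card_fin]
          rw [hwdef]
          simp [Finset.ne_of_mem_erase hj]
      have hnum : (1 + lam) ^ (-α) * ((1 - lam * c) ^ (-α)) ^ (n - 1) ≤ δ₁ / n := by
        have := chernoff_numeric n hn α L₁ δ₁ S hα hδ₁0 hL₁ hL₁def (by rw [← ht₁def]; linarith) hSn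
        rw [← ht₁def, ← hadef] at this
        rw [hzc, hlamdef]
        exact this
      have hfin : μ {ω : Ω | 0 ≤ (∑ j, X j) ω} ≤ ENNReal.ofReal (δ₁ / n) := by
        have h2 : (μ {ω : Ω | 0 ≤ (∑ j, X j) ω}).toReal ≤ δ₁ / n := by
          refine hchern.trans ?_
          rw [hmgfsum, hprod]
          simpa using hnum
        calc μ {ω : Ω | 0 ≤ (∑ j, X j) ω}
            = ENNReal.ofReal ((μ {ω : Ω | 0 ≤ (∑ j, X j) ω}).toReal) :=
              (ENNReal.ofReal_toReal (measure_ne_top μ _)).symm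
          _ ≤ ENNReal.ofReal (δ₁ / n) := ENNReal.ofReal_le_ofReal h2
      refine le_trans (le_of_eq ?_) hfin
      congr 1
      ext ω
      simp only [Set.mem_setOf_eq, Finset.sum_apply, hXdef, hwdef]
    -- union bound
    set A : Fin n → Set Ω := fun i => {ω : Ω | 0 ≤ ∑ j, (if j = i then -lam else lam * c) * y j ω}
      with hAdef
    have hunion : μ (⋃ i, A i) ≤ ENNReal.ofReal δ₁ := by
      calc μ (⋃ i, A i) ≤ ∑' i, μ (A i) := measure_iUnion_le A
        _ = ∑ i, μ (A i) := tsum_fintype _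
        _ ≤ ∑ i : Fin n, ENNReal.ofReal (δ₁ / n) := Finset.sum_le_sum fun i _ => hkey i
        _ = n * ENNReal.ofReal (δ₁ / n) := by
            rw [Finset.sum_const, Finset.card_univ, Fintype.card_fin, nsmul_eq_mul]
        _ = ENNReal.ofReal δ₁ := by
            rw [← ENNReal.ofReal_natCast n, ← ENNReal.ofReal_mul (by positivity)]
            congr 1
            field_simp
    -- inclusion
    have hsub : badᶜ ∩ (⋃ i, A i)ᶜ ⊆ T := by
      intro ω ⟨hω1, hω2⟩
      intro i
      rw [Set.mem_compl_iff, Set.mem_iUnion] at hω2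
      push_neg at hω2
      have hAi := hω2 i
      rw [hAdef, Set.mem_setOf_eq, not_le] at hAi
      -- decompose the sum
      have hdecomp : ∑ j, (if j = i then -lam else lam * c) * y j ω =
          -lam * y i ω + lam * c * ∑ j ∈ Finset.univ.erase i, y j ω := by
        rw [← Finset.add_sum_erase Finset.univ _ (Finset.mem_univ i)]
        simp only [if_pos rfl]
        congr 1
        rw [Finset.mul_sum]
        refine Finset.sum_congr rfl fun j hj => ?_
        rw [if_neg (Finset.ne_of_mem_erase hj)]
      rw [hdecomp] at hAi
      set R := ∑ j ∈ Finset.univ.erase i, y j ω with hRdef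
      have hcR : c * R < y i ω := by
        by_contra hcon
        push_neg at hcon
        have h5 := mul_le_mul_of_nonneg_left hcon hlam.le
        rw [← mul_assoc] at h5
        linarith
      have hsum_split : ∑ j, y j ω = y i ω + R := by
        rw [hRdef, ← Finset.add_sum_erase Finset.univ _ (Finset.mem_univ i)]
      have hsumpos' := hsumpos ω hω1
      have hyi := hypos ω hω1 i
      have hceq : c * (S - a) = a := by rw [hcdef]; field_simp
      have haR : a * R ≤ y i ω * (S - a) :=
        calc a * R = c * (S - a) * R := by rw [hceq]
          _ = c * R * (S - a) := by ring
          _ ≤ y i ω * (S - a) := (mul_lt_mul_of_pos_right hcR hSa).le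
      -- show the bound
      show (1 / (n : ℝ)) * ((α - t₁) / D) ≤ y i ω / (∑ j, y j ω)
      rw [← hadef, hBeq, div_le_div_iff₀ (by linarith : (0:ℝ) < S) hsumpos']
      rw [hsum_split]
      have h3 : a * (y i ω + R) = y i ω * a + a * R := by ring
      have h4 : y i ω * S = y i ω * a + y i ω * (S - a) := by ring
      linarith
    -- measurability of T
    have hTmeas : MeasurableSet T := by
      have hTeq : T = ⋂ i, {ω : Ω | 1 / (n:ℝ) * (a / D) ≤ y i ω / ∑ j, y j ω} := by
        ext ω; simp [hTdef, Set.mem_iInter]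
      rw [hTeq]
      exact MeasurableSet.iInter fun i => measurableSet_le measurable_const
        ((hy i).div (Finset.measurable_sum _ fun j _ => hy j))
    have hTc : μ Tᶜ ≤ ENNReal.ofReal δ₁ := by
      have hss : Tᶜ ⊆ bad ∪ ⋃ i, A i := by
        intro ω hω
        by_contra hcon
        rcases not_or.mp hcon with ⟨h1, h2⟩
        exact hω (hsub ⟨h1, h2⟩)
      calc μ Tᶜ ≤ μ (bad ∪ ⋃ i, A i) := measure_mono hss
        _ ≤ μ bad + μ (⋃ i, A i) := measure_union_le _ _
        _ ≤ 0 + ENNReal.ofReal δ₁ := add_le_add hbadnull.le hunion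
        _ = ENNReal.ofReal δ₁ := zero_add _
    have hT1 : μ T = 1 - μ Tᶜ := by
      have h := prob_compl_eq_one_sub (μ := μ) hTmeas.compl
      rwa [compl_compl] at h
    have hfinal : ENNReal.ofReal (1 - δ₁ - δ₂) + ENNReal.ofReal δ₁ ≤ 1 := by
      rw [← ENNReal.ofReal_add (by linarith) hδ₁0.le]
      exact ENNReal.ofReal_le_one.mpr (by linarith)
    calc ENNReal.ofReal (1 - δ₁ - δ₂) ≤ 1 - ENNReal.ofReal δ₁ :=
          ENNReal.le_sub_of_add_le_right ENNReal.ofReal_ne_top hfinal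
      _ ≤ 1 - μ Tᶜ := tsub_le_tsub_left hTc 1
      _ = μ T := hT1.symm
end

section
/- Let h ~ Dir(α_1, …, α_K) with α_0 = Σ_k α_k, and conditionally on h, let z, z' be i.i.d. Multi(h), and given topics μ_1,…,μ_K ∈ ℝ^V (probability vectors), let x ~ Multi(μ_z), x' ~ Multi(μ_{z'}) be conditionally independent words (as basis vectors in ℝ^V). Then E[x ⊗ x'] − (α_0/(α_0+1)) E[x] ⊗ E[x'] = Σ_{k=1}^K (α_k / (α_0(α_0+1))) μ_k ⊗ μ_k. -/
open MeasureTheory ProbabilityTheory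
open scoped ENNReal NNReal

/-- The Dirichlet distribution on `ℝ^K` with parameter `α`, realized as the law of
`(y_1/Σy, …, y_K/Σy)` where the `y_i` are independent `Gamma(α_i, 1)`. -/
noncomputable def dirichletMeasure {K : ℕ} (α : Fin K → ℝ) : Measure (Fin K → ℝ) :=
  Measure.map (fun y i => y i / ∑ j, y j) (Measure.pi fun i => gammaMeasure (α i) 1)

/-- The discrete (categorical/multinomial single-draw) measure on `Fin n` with
probability vector `p`. -/
noncomputable def discreteMeasure {n : ℕ} (p : Fin n → ℝ) : Measure (Fin n) :=
  ∑ k, ENNReal.ofReal (p k) • Measure.dirac k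

/-- Given topics `μs` and topic mixing `h`, the law of a single word:
draw a topic `z ~ Multi(h)`, then a word `x ~ Multi(μs z)`. -/
noncomputable def wordMeasure {K V : ℕ} (μs : Fin K → Fin V → ℝ) (h : Fin K → ℝ) :
    Measure (Fin V) :=
  (discreteMeasure h).bind fun k => discreteMeasure (μs k)

/-- The joint law of two words `(x, x')` in a document: draw `h ~ Dir(α)`, then two
conditionally i.i.d. words from `wordMeasure μs h`. -/
noncomputable def wordPairMeasure {K V : ℕ} (α : Fin K → ℝ)
    (μs : Fin K → Fin V → ℝ) : Measure (Fin V × Fin V) :=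
  (dirichletMeasure α).bind fun h => (wordMeasure μs h).prod (wordMeasure μs h)

section Aux
open Real Set

variable {K V n : ℕ}

lemma lintegral_discreteMeasure (p : Fin n → ℝ) (f : Fin n → ℝ≥0∞) :
    ∫⁻ v, f v ∂discreteMeasure p = ∑ v, ENNReal.ofReal (p v) * f v := by
  simp [discreteMeasure, lintegral_smul_measure, lintegral_dirac]

lemma lintegral_wordMeasure (μs : Fin K → Fin V → ℝ) (h : Fin K → ℝ) (f : Fin V → ℝ≥0∞) :
    ∫⁻ v, f v ∂wordMeasure μs h
      = ∑ k, ENNReal.ofReal (h k) * ∑ v, ENNReal.ofReal (μs k v) * f v := by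
  rw [wordMeasure, Measure.lintegral_bind (measurable_of_countable _).aemeasurable (measurable_of_countable _).aemeasurable,
    lintegral_discreteMeasure]
  simp [lintegral_discreteMeasure]

instance (p : Fin n → ℝ) : IsFiniteMeasure (discreteMeasure p) := by
  constructor
  rw [← lintegral_one, lintegral_discreteMeasure]
  simp only [mul_one]
  exact ENNReal.sum_lt_top.2 fun _ _ => ENNReal.ofReal_lt_top

instance (μs : Fin K → Fin V → ℝ) (h : Fin K → ℝ) : IsFiniteMeasure (wordMeasure μs h) := by
  constructor
  rw [← lintegral_one, lintegral_wordMeasure]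
  exact ENNReal.sum_lt_top.2 fun _ _ => ENNReal.mul_lt_top ENNReal.ofReal_lt_top
    (ENNReal.sum_lt_top.2 fun _ _ => ENNReal.mul_lt_top ENNReal.ofReal_lt_top (by simp))

lemma wordMeasure_apply (μs : Fin K → Fin V → ℝ) (h : Fin K → ℝ) (t : Set (Fin V))
    (ht : MeasurableSet t) :
    wordMeasure μs h t
      = ∑ k, ENNReal.ofReal (h k) * ∑ v, ENNReal.ofReal (μs k v) * t.indicator 1 v := by
  rw [← lintegral_indicator_one ht, lintegral_wordMeasure]

lemma measurable_pairKernel (μs : Fin K → Fin V → ℝ) :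
    Measurable (fun h : Fin K → ℝ => (wordMeasure μs h).prod (wordMeasure μs h)) := by
  apply Measure.measurable_of_measurable_coe
  intro s hs
  have : (fun h : Fin K → ℝ => (wordMeasure μs h).prod (wordMeasure μs h) s)
      = fun h => ∑ k, ENNReal.ofReal (h k) * ∑ v, ENNReal.ofReal (μs k v) *
          (∑ k', ENNReal.ofReal (h k') * ∑ w, ENNReal.ofReal (μs k' w) *
            (Prod.mk v ⁻¹' s).indicator 1 w) := by
    funext h
    rw [Measure.prod_apply hs, lintegral_wordMeasure]
    exact Finset.sum_congr rfl fun k _ => by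
      congr 1
      exact Finset.sum_congr rfl fun v _ => by
        rw [wordMeasure_apply _ _ _ (measurable_prodMk_left hs)]
  rw [this]
  apply Finset.measurable_sum
  intro k _
  apply Measurable.mul (ENNReal.measurable_ofReal.comp (measurable_pi_apply k))
  apply Finset.measurable_sum
  intro v _
  apply Measurable.const_mul
  apply Finset.measurable_sum
  intro k' _
  exact (ENNReal.measurable_ofReal.comp (measurable_pi_apply k')).mul_const _


lemma measurable_normalize :
    Measurable (fun y : Fin K → ℝ => (fun i => y i / ∑ j, y j)) := by
  apply measurable_pi_lambda
  intro i
  exact (measurable_pi_apply i).div (Finset.measurable_sum _ fun j _ => measurable_pi_apply j)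

lemma lintegral_wordPairMeasure (α : Fin K → ℝ) (μs : Fin K → Fin V → ℝ)
    (f g : Fin V → ℝ≥0∞) :
    ∫⁻ p, f p.1 * g p.2 ∂wordPairMeasure α μs
      = ∫⁻ y, (∑ k, ENNReal.ofReal (y k / ∑ j, y j) * ∑ v, ENNReal.ofReal (μs k v) * f v)
          * (∑ k, ENNReal.ofReal (y k / ∑ j, y j) * ∑ v, ENNReal.ofReal (μs k v) * g v)
          ∂(Measure.pi fun i => gammaMeasure (α i) 1) := by
  rw [wordPairMeasure, Measure.lintegral_bind (measurable_pairKernel μs).aemeasurable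
    (measurable_of_countable _).aemeasurable]
  have h1 : ∀ h : Fin K → ℝ, ∫⁻ p, f p.1 * g p.2 ∂((wordMeasure μs h).prod (wordMeasure μs h))
      = (∑ k, ENNReal.ofReal (h k) * ∑ v, ENNReal.ofReal (μs k v) * f v)
        * (∑ k, ENNReal.ofReal (h k) * ∑ v, ENNReal.ofReal (μs k v) * g v) := by
    intro h
    rw [lintegral_prod_mul (measurable_of_countable _).aemeasurable
      (measurable_of_countable _).aemeasurable, lintegral_wordMeasure, lintegral_wordMeasure]
  simp only [h1]
  rw [dirichletMeasure, lintegral_map _ measurable_normalize]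
  apply Measurable.mul <;>
  · apply Finset.measurable_sum
    intro k _
    exact (ENNReal.measurable_ofReal.comp (measurable_pi_apply k)).mul_const _

lemma integrableOn_one_add_rpow {r : ℝ} (hr : r < -1) :
    IntegrableOn (fun t : ℝ => (1+t) ^ r) (Ioi (0:ℝ)) ∧
      ∫ t in Ioi (0:ℝ), (1+t) ^ r = -(1 / (r+1)) := by
  have hmap : volume.restrict (Ioi (1:ℝ))
      = Measure.map (fun t => t + 1) (volume.restrict (Ioi (0:ℝ))) := by
    conv_lhs => rw [← map_add_right_eq_self volume (1:ℝ)]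
    rw [Measure.restrict_map (measurable_add_const 1) measurableSet_Ioi]
    congr 1
    ext t
    simp
  have hint : Integrable (fun u : ℝ => u ^ r) (volume.restrict (Ioi (1:ℝ))) :=
    integrableOn_Ioi_rpow_of_lt hr one_pos
  have hval : ∫ u in Ioi (1:ℝ), u ^ r = -(1/(r+1)) := by
    rw [integral_Ioi_rpow_of_lt hr one_pos]
    simp
    ring
  rw [hmap] at hint
  rw [hmap] at hval
  have hmeas : AEMeasurable (fun t : ℝ => t + 1) (volume.restrict (Ioi (0:ℝ))) :=
    (measurable_add_const 1).aemeasurable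
  have hsm : AEStronglyMeasurable (fun u : ℝ => u ^ r)
      (Measure.map (fun t => t + 1) (volume.restrict (Ioi (0:ℝ)))) :=
    (measurable_id'.pow_const r).aestronglyMeasurable
  constructor
  · have := (integrable_map_measure hsm hmeas).1 hint
    refine this.congr (ae_of_all _ fun t => ?_)
    simp [Function.comp, add_comm]
  · rw [integral_map hmeas hsm] at hval
    rw [← hval]
    refine setIntegral_congr_fun measurableSet_Ioi fun t _ => ?_
    simp [add_comm]

lemma tint (m : ℕ) (hm : m ≤ 1) {s : ℝ} (hs : 0 < s) :
    ∫⁻ t in Ioi (0:ℝ), ENNReal.ofReal (t ^ m * (1+t) ^ (-(s + m + 1) : ℝ))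
      = ENNReal.ofReal (1 / (s * (s+1) ^ m)) := by
  have hs1 : s + 1 ≠ 0 := by linarith
  have hs2 : -(s+1) + 1 ≠ 0 := by linarith
  have hs3 : -(s+2) + 1 ≠ 0 := by linarith
  interval_cases m
  · have h := integrableOn_one_add_rpow (r := -(s+1)) (by linarith)
    rw [← ofReal_integral_eq_lintegral_ofReal]
    · congr 1
      rw [setIntegral_congr_fun measurableSet_Ioi
        (fun t _ => by push_cast; norm_num :
          EqOn (fun t : ℝ => t ^ (0:ℕ) * (1+t) ^ (-(s + (0:ℕ) + 1) : ℝ))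
            (fun t : ℝ => (1+t) ^ (-(s+1) : ℝ)) (Ioi 0)), h.2]
      field_simp
      ring
    · refine h.1.congr (ae_of_all _ fun t => ?_)
      push_cast
      norm_num
    · filter_upwards [ae_restrict_mem measurableSet_Ioi] with t ht
      have : (0:ℝ) < 1 + t := by simp at ht; linarith
      positivity
  · have h1 := integrableOn_one_add_rpow (r := -(s+1)) (by linarith)
    have h2 := integrableOn_one_add_rpow (r := -(s+2)) (by linarith)
    have hkey : ∀ t ∈ Ioi (0:ℝ),
        t ^ (1:ℕ) * (1+t) ^ (-(s + (1:ℕ) + 1) : ℝ) = (1+t) ^ (-(s+1):ℝ) - (1+t) ^ (-(s+2):ℝ) := by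
      intro t ht
      have h0 : (0:ℝ) < 1 + t := by simp at ht; linarith
      have e1 : ((1+t) : ℝ) ^ (-(s+1):ℝ) = (1+t) * (1+t) ^ (-(s+2):ℝ) := by
        rw [show (-(s+1) : ℝ) = 1 + -(s+2) by ring, rpow_add h0, rpow_one]
      rw [e1, show (-(s + (1:ℕ) + 1) : ℝ) = -(s+2) by push_cast; ring]
      ring
    have hint : IntegrableOn
        (fun t : ℝ => t ^ (1:ℕ) * (1+t) ^ (-(s + (1:ℕ) + 1) : ℝ)) (Ioi 0) := by
      refine ((h1.1.sub h2.1).congr ?_)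
      filter_upwards [ae_restrict_mem measurableSet_Ioi] with t ht
      exact (hkey t ht).symm
    rw [← ofReal_integral_eq_lintegral_ofReal hint]
    · congr 1
      rw [setIntegral_congr_fun measurableSet_Ioi hkey, integral_sub h1.1 h2.1, h1.2, h2.2]
      rw [show (-(s+1) + 1 : ℝ) = -s by ring, show (-(s+2) + 1 : ℝ) = -(s+1) by ring]
      have hs0 := hs.ne'
      simp only [div_neg, neg_neg, pow_one]
      rw [div_sub_div _ _ hs0 hs1, div_eq_div_iff (by positivity) (by positivity)]
      ring
    · filter_upwards [ae_restrict_mem measurableSet_Ioi] with t ht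
      have h0 : (0:ℝ) < 1 + t := by simp at ht; linarith
      have h0' : (0:ℝ) < t := by simpa using ht
      positivity

lemma laplace (m : ℕ) (hm : m ≤ 1) {S : ℝ} (hS : 0 < S) :
    ∫⁻ t in Ioi (0:ℝ), ENNReal.ofReal (t ^ m * Real.exp (-(S * t)))
      = ENNReal.ofReal (1 / S ^ (m+1)) := by
  have hm1 : (-1:ℝ) < (m:ℝ) := lt_of_lt_of_le neg_one_lt_zero (Nat.cast_nonneg m)
  have hint : IntegrableOn (fun t : ℝ => t ^ m * Real.exp (-(S * t))) (Ioi 0) := by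
    refine (integrableOn_rpow_mul_exp_neg_mul_rpow (s := (m:ℝ)) (p := 1)
      hm1 one_pos hS).congr_fun (fun t ht => ?_) measurableSet_Ioi
    beta_reduce
    rw [rpow_one, rpow_natCast, neg_mul]
  rw [← ofReal_integral_eq_lintegral_ofReal hint]
  · congr 1
    have heq : ∫ t in Ioi (0:ℝ), t ^ m * Real.exp (-(S * t))
        = ∫ t in Ioi (0:ℝ), t ^ (((m:ℝ)+1) - 1) * Real.exp (-(S * t)) := by
      refine setIntegral_congr_fun measurableSet_Ioi fun t ht => ?_
      show t ^ m * Real.exp (-(S * t)) = t ^ (((m:ℝ)+1) - 1) * Real.exp (-(S * t))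
      rw [show ((m:ℝ)+1) - 1 = (m:ℝ) by ring, rpow_natCast]
    rw [heq, integral_rpow_mul_exp_neg_mul_Ioi (by positivity) hS]
    rw [show ((m:ℝ) + 1) = ((m+1 : ℕ) : ℝ) by push_cast; ring, rpow_natCast]
    rw [div_pow, one_pow]
    interval_cases m
    · norm_num [Real.Gamma_one]
    · norm_num [Real.Gamma_two]
  · filter_upwards [ae_restrict_mem measurableSet_Ioi] with t ht
    have : (0:ℝ) < t := by simpa using ht
    positivity

lemma gamma_moment {a : ℝ} (ha : 0 < a) {t : ℝ} (ht : 0 ≤ t) (c : ℕ) :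
    ∫⁻ x, ENNReal.ofReal (x ^ c * Real.exp (-(t * x))) ∂gammaMeasure a 1
      = ENNReal.ofReal (Real.Gamma (a + c) / Real.Gamma a * (1 + t) ^ (-(a + c) : ℝ)) := by
  have h1t : (0:ℝ) < 1 + t := by linarith
  have hGa : (0:ℝ) < Real.Gamma a := Real.Gamma_pos_of_pos ha
  have hac : (0:ℝ) < a + c := by positivity
  have hmf : Measurable (fun x : ℝ => ENNReal.ofReal (x ^ c * Real.exp (-(t * x)))) := by
    apply ENNReal.measurable_ofReal.comp
    exact (measurable_id'.pow_const c).mul ((measurable_id'.const_mul t).neg.exp)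
  have hpdf : Measurable (gammaPDF a 1) :=
    ENNReal.measurable_ofReal.comp (measurable_gammaPDFReal a 1)
  rw [gammaMeasure, lintegral_withDensity_eq_lintegral_mul _ hpdf hmf]
  rw [← lintegral_add_compl _ (measurableSet_Ici (a := (0:ℝ)))]
  have hIio : ∫⁻ x in (Ici (0:ℝ))ᶜ,
      (gammaPDF a 1 * fun x => ENNReal.ofReal (x ^ c * Real.exp (-(t * x)))) x = 0 := by
    rw [compl_Ici]
    rw [setLIntegral_congr_fun_ae (g := fun _ => (0:ℝ≥0∞)) measurableSet_Iio
      (ae_of_all _ (fun x (hx : x < 0) => by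
        simp only [Pi.mul_apply, gammaPDF_of_neg hx, zero_mul]))]
    simp
  rw [hIio, add_zero]
  rw [setLIntegral_congr Ioi_ae_eq_Ici.symm]
  have hptwise : ∀ x ∈ Ioi (0:ℝ),
      (gammaPDF a 1 * fun x => ENNReal.ofReal (x ^ c * Real.exp (-(t * x)))) x
        = ENNReal.ofReal ((1 / Real.Gamma a) * (x ^ (a + c - 1) * Real.exp (-((1+t) * x)))) := by
    intro x (hx : 0 < x)
    simp only [Pi.mul_apply, gammaPDF_of_nonneg hx.le]
    rw [← ENNReal.ofReal_mul (by positivity)]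
    congr 1
    rw [one_rpow]
    rw [show Real.exp (-((1+t)*x)) = Real.exp (-(1*x)) * Real.exp (-(t*x)) by
      rw [← Real.exp_add]; ring_nf]
    rw [show a + (c:ℝ) - 1 = (a - 1) + c by ring, Real.rpow_add hx, rpow_natCast]
    ring
  rw [setLIntegral_congr_fun_ae measurableSet_Ioi (ae_of_all _ hptwise)]
  have hint : IntegrableOn
      (fun x : ℝ => (1 / Real.Gamma a) * (x ^ (a + c - 1) * Real.exp (-((1+t) * x)))) (Ioi 0) := by
    apply Integrable.const_mul
    refine (integrableOn_rpow_mul_exp_neg_mul_rpow (s := a + c - 1) (p := 1)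
      (by linarith) one_pos h1t).congr_fun (fun x hx => ?_) measurableSet_Ioi
    beta_reduce
    rw [rpow_one, neg_mul]
  rw [← ofReal_integral_eq_lintegral_ofReal hint]
  · congr 1
    rw [integral_const_mul, show a + (c:ℝ) - 1 = (a + c) - 1 by ring,
      integral_rpow_mul_exp_neg_mul_Ioi hac h1t]
    rw [one_div (1+t), Real.inv_rpow h1t.le, ← Real.rpow_neg h1t.le]
    field_simp
  · filter_upwards [ae_restrict_mem measurableSet_Ioi] with x hx
    have : (0:ℝ) < x := by simpa using hx
    positivity

lemma lintegral_pi_prod : ∀ {K : ℕ} (μ : Fin K → Measure ℝ), (∀ i, SigmaFinite (μ i)) →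
    ∀ (f : Fin K → ℝ → ℝ≥0∞), (∀ i, Measurable (f i)) →
    ∫⁻ y, ∏ i, f i (y i) ∂Measure.pi μ = ∏ i, ∫⁻ x, f i x ∂μ i := by
  intro K
  induction K with
  | zero =>
    intro μ _ f _
    simp only [Finset.univ_eq_empty, Finset.prod_empty]
    rw [Measure.pi_of_empty]
    simp
  | succ n ih =>
    intro μ hσ f hf
    haveI := hσ
    have hmp := measurePreserving_piFinSuccAbove μ 0
    have hg : Measurable fun z : ℝ × (Fin n → ℝ) =>
        f 0 z.1 * ∏ i : Fin n, f ((0:Fin (n+1)).succAbove i) (z.2 i) :=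
      ((hf 0).comp measurable_fst).mul
        (Finset.measurable_prod _ fun i _ =>
          (hf _).comp ((measurable_pi_apply i).comp measurable_snd))
    have key : ∫⁻ y, ∏ i, f i (y i) ∂Measure.pi μ
        = ∫⁻ z : ℝ × (Fin n → ℝ),
            f 0 z.1 * ∏ i : Fin n, f ((0:Fin (n+1)).succAbove i) (z.2 i)
            ∂((μ 0).prod (Measure.pi fun i => μ ((0:Fin (n+1)).succAbove i))) := by
      rw [← hmp.lintegral_comp hg]
      congr 1
      funext y
      simp only [MeasurableEquiv.piFinSuccAbove_apply]
      rw [Fin.prod_univ_succAbove (fun i => f i (y i)) 0]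
      rfl
    rw [key, lintegral_prod_mul (f := f 0)
      (g := fun w : Fin n → ℝ => ∏ i : Fin n, f ((0:Fin (n+1)).succAbove i) (w i))
      ((hf 0).aemeasurable)
      (Finset.measurable_prod _ fun i _ =>
        (hf _).comp (measurable_pi_apply i)).aemeasurable]
    rw [ih _ (fun i => inferInstance) _ (fun i => hf _)]
    rw [Fin.prod_univ_succAbove (fun i => ∫⁻ x, f i x ∂μ i) 0]

lemma gammaMeasure_Iic_zero {a : ℝ} : gammaMeasure a 1 (Iic 0) = 0 := by
  rw [gammaMeasure, withDensity_apply _ measurableSet_Iic]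
  rw [setLIntegral_congr (Iio_ae_eq_Iic (a := (0:ℝ))).symm]
  exact lintegral_gammaPDF_of_nonpos le_rfl

lemma ae_pos_pi {K : ℕ} (α : Fin K → ℝ) (hα : ∀ i, 0 < α i) :
    ∀ᵐ y : Fin K → ℝ ∂(Measure.pi fun i => gammaMeasure (α i) 1), ∀ i, 0 < y i := by
  haveI : ∀ i, IsProbabilityMeasure (gammaMeasure (α i) 1) :=
    fun i => isProbabilityMeasure_gammaMeasure (hα i) one_pos
  haveI : ∀ i, SigmaFinite (gammaMeasure (α i) 1) := fun i => inferInstance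
  refine ae_all_iff.2 fun i => ae_iff.2 ?_
  have hc : {y : Fin K → ℝ | ¬ 0 < y i} = Function.eval i ⁻¹' (Iic 0) := by
    ext y; simp [not_lt]
  rw [hc]
  exact Measure.pi_eval_preimage_null _ gammaMeasure_Iic_zero

lemma rpow_finset_sum {x : ℝ} (hx : 0 < x) {ι : Type*} (s : Finset ι) (f : ι → ℝ) :
    x ^ (∑ i ∈ s, f i) = ∏ i ∈ s, x ^ f i := by
  classical
  induction s using Finset.cons_induction with
  | empty => simp
  | cons a s ha ih => rw [Finset.sum_cons, Finset.prod_cons, Real.rpow_add hx, ih]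

lemma core {K : ℕ} (α : Fin K → ℝ) (hα : ∀ k, 0 < α k) (hα0 : 0 < ∑ i, α i)
    (m : ℕ) (hm : m ≤ 1) (c : Fin K → ℕ) (hc : ∑ i, c i = m + 1) :
    ∫⁻ y, ENNReal.ofReal ((∏ i, y i ^ c i) / (∑ i, y i) ^ (m+1))
        ∂(Measure.pi fun i => gammaMeasure (α i) 1)
      = ENNReal.ofReal ((∏ i, Real.Gamma (α i + c i) / Real.Gamma (α i))
          * (1 / ((∑ i, α i) * ((∑ i, α i) + 1) ^ m))) := by
  classical
  haveI : ∀ i, IsProbabilityMeasure (gammaMeasure (α i) 1) :=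
    fun i => isProbabilityMeasure_gammaMeasure (hα i) one_pos
  haveI : ∀ i, SigmaFinite (gammaMeasure (α i) 1) := fun i => inferInstance
  set Pm : Measure (Fin K → ℝ) := Measure.pi fun i => gammaMeasure (α i) 1 with hPm
  set A : ℝ := ∑ i, α i with hA
  have hne : (Finset.univ : Finset (Fin K)).Nonempty := by
    by_contra hemp
    rw [Finset.not_nonempty_iff_eq_empty] at hemp
    rw [hA, hemp, Finset.sum_empty] at hα0
    exact lt_irrefl 0 hα0
  set C : ℝ := ∏ i, Real.Gamma (α i + c i) / Real.Gamma (α i) with hC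
  have hCnn : 0 ≤ C := Finset.prod_nonneg fun i _ =>
    div_nonneg (Real.Gamma_pos_of_pos (add_pos_of_pos_of_nonneg (hα i)
      (Nat.cast_nonneg _))).le (Real.Gamma_pos_of_pos (hα i)).le
  -- step 1+2: rewrite as double lintegral
  have step12 : ∫⁻ y, ENNReal.ofReal ((∏ i, y i ^ c i) / (∑ i, y i) ^ (m+1)) ∂Pm
      = ∫⁻ y, (∫⁻ t in Ioi (0:ℝ),
          ENNReal.ofReal (∏ i, y i ^ c i)
            * ENNReal.ofReal (t ^ m * Real.exp (-((∑ i, y i) * t)))) ∂Pm := by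
    refine lintegral_congr_ae ?_
    filter_upwards [ae_pos_pi α hα] with y hy
    have hS : 0 < ∑ i, y i := Finset.sum_pos (fun i _ => hy i) hne
    have hP : 0 ≤ ∏ i, y i ^ c i := Finset.prod_nonneg fun i _ => pow_nonneg (hy i).le _
    rw [lintegral_const_mul' _ _ ENNReal.ofReal_ne_top, laplace m hm hS,
      ← ENNReal.ofReal_mul hP, mul_one_div]
  rw [step12]
  -- step 3: swap
  have hmeas : Measurable (Function.uncurry fun (y : Fin K → ℝ) (t : ℝ) =>
      ENNReal.ofReal (∏ i, y i ^ c i)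
        * ENNReal.ofReal (t ^ m * Real.exp (-((∑ i, y i) * t)))) := by
    have hP : Measurable fun y : Fin K → ℝ => ∏ i, y i ^ c i :=
      Finset.measurable_prod _ fun i _ => (measurable_pi_apply i).pow_const _
    have hS : Measurable fun y : Fin K → ℝ => ∑ i, y i :=
      Finset.measurable_sum _ fun i _ => measurable_pi_apply i
    exact (ENNReal.measurable_ofReal.comp (hP.comp measurable_fst)).mul
      (ENNReal.measurable_ofReal.comp
        ((measurable_snd.pow_const m).mul
          (((hS.comp measurable_fst).mul measurable_snd).neg.exp)))
  rw [lintegral_lintegral_swap hmeas.aemeasurable]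
  -- step 4: inner-y integral for fixed t > 0
  have step4 : ∀ t ∈ Ioi (0:ℝ),
      ∫⁻ y, ENNReal.ofReal (∏ i, y i ^ c i)
          * ENNReal.ofReal (t ^ m * Real.exp (-((∑ i, y i) * t))) ∂Pm
        = ENNReal.ofReal C
            * ENNReal.ofReal (t ^ m * (1 + t) ^ (-(A + m + 1) : ℝ)) := by
    intro t (htpos : 0 < t)
    have hcongr : ∫⁻ y, ENNReal.ofReal (∏ i, y i ^ c i)
          * ENNReal.ofReal (t ^ m * Real.exp (-((∑ i, y i) * t))) ∂Pm
        = ∫⁻ y, ENNReal.ofReal (t ^ m)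
            * ∏ i, ENNReal.ofReal (y i ^ c i * Real.exp (-(t * y i))) ∂Pm := by
      refine lintegral_congr_ae ?_
      filter_upwards [ae_pos_pi α hα] with y hy
      have hP : 0 ≤ ∏ i, y i ^ c i := Finset.prod_nonneg fun i _ => pow_nonneg (hy i).le _
      have hexp : Real.exp (-((∑ i, y i) * t)) = ∏ i, Real.exp (-(t * y i)) := by
        rw [← Real.exp_sum]
        congr 1
        rw [Finset.sum_neg_distrib, ← Finset.mul_sum]
        ring
      rw [← ENNReal.ofReal_mul hP, ← ENNReal.ofReal_prod_of_nonneg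
        (fun i _ => mul_nonneg (pow_nonneg (hy i).le _) (Real.exp_nonneg _)), ← ENNReal.ofReal_mul (pow_nonneg htpos.le m)]
      congr 1
      rw [Finset.prod_mul_distrib, hexp]
      ring
    rw [hcongr, lintegral_const_mul' _ _ ENNReal.ofReal_ne_top, hPm,
      lintegral_pi_prod _ (fun i => inferInstance)
        (fun i x => ENNReal.ofReal (x ^ c i * Real.exp (-(t * x))))
        (fun i => ENNReal.measurable_ofReal.comp
          ((measurable_id'.pow_const _).mul ((measurable_id'.const_mul t).neg.exp)))]
    have hprod : ∏ i, ∫⁻ x, ENNReal.ofReal (x ^ c i * Real.exp (-(t * x)))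
          ∂gammaMeasure (α i) 1
        = ENNReal.ofReal (C * (1 + t) ^ (-(A + m + 1) : ℝ)) := by
      have h1t : (0:ℝ) < 1 + t := by linarith
      have : ∀ i, ∫⁻ x, ENNReal.ofReal (x ^ c i * Real.exp (-(t * x)))
            ∂gammaMeasure (α i) 1
          = ENNReal.ofReal (Real.Gamma (α i + c i) / Real.Gamma (α i)
              * (1 + t) ^ (-(α i + c i) : ℝ)) :=
        fun i => gamma_moment (hα i) htpos.le (c i)
      simp_rw [this]
      rw [← ENNReal.ofReal_prod_of_nonneg (fun i _ => mul_nonneg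
        (div_nonneg (Real.Gamma_pos_of_pos (add_pos_of_pos_of_nonneg (hα i)
          (Nat.cast_nonneg _))).le (Real.Gamma_pos_of_pos (hα i)).le)
        (Real.rpow_nonneg (by linarith) _))]
      congr 1
      have hexpsum : (∑ i, -(α i + (c i : ℝ))) = -(A + m + 1) := by
        rw [Finset.sum_neg_distrib, Finset.sum_add_distrib, ← hA, ← Nat.cast_sum, hc]
        push_cast
        ring
      rw [Finset.prod_mul_distrib, ← rpow_finset_sum h1t, hexpsum, ← hC]
    have h1t : (0:ℝ) < 1 + t := by linarith
    rw [hprod, ← ENNReal.ofReal_mul (pow_nonneg htpos.le m), ← ENNReal.ofReal_mul hCnn]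
    congr 1
    ring
  rw [setLIntegral_congr_fun_ae measurableSet_Ioi (ae_of_all _ step4),
    lintegral_const_mul' _ _ ENNReal.ofReal_ne_top, tint m hm hα0,
    ← ENNReal.ofReal_mul hCnn]

lemma moment1 {K : ℕ} (α : Fin K → ℝ) (hα : ∀ k, 0 < α k) (hα0 : 0 < ∑ i, α i) (k : Fin K) :
    ∫⁻ y, ENNReal.ofReal (y k / ∑ i, y i) ∂(Measure.pi fun i => gammaMeasure (α i) 1)
      = ENNReal.ofReal (α k * (1 / ∑ i, α i)) := by
  classical
  have h := core α hα hα0 0 (by norm_num) (fun i => if i = k then 1 else 0) (by simp)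
  have hL : ∀ y : Fin K → ℝ, (∏ i, y i ^ (if i = k then 1 else 0 : ℕ)) / (∑ i, y i) ^ (0+1)
      = y k / ∑ i, y i := by
    intro y
    have : ∀ i, y i ^ (if i = k then 1 else 0 : ℕ) = if i = k then y i else 1 := by
      intro i; by_cases hik : i = k <;> simp [hik]
    rw [zero_add, pow_one]
    congr 1
    simp_rw [this]
    exact Fintype.prod_ite_eq' k (fun i => y i)
  have hC : (∏ i, Real.Gamma (α i + (if i = k then 1 else 0 : ℕ)) / Real.Gamma (α i)) = α k := by
    have : ∀ i, Real.Gamma (α i + (if i = k then 1 else 0 : ℕ)) / Real.Gamma (α i)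
        = if i = k then α i else 1 := by
      intro i
      by_cases hik : i = k
      · simp only [hik, if_true, Nat.cast_one]
        rw [Real.Gamma_add_one (hα k).ne']
        exact mul_div_cancel_right₀ _ (Real.Gamma_pos_of_pos (hα k)).ne'
      · simp only [hik, if_false, Nat.cast_zero, add_zero]
        exact div_self (Real.Gamma_pos_of_pos (hα i)).ne'
    simp_rw [this]
    exact Fintype.prod_ite_eq' k (fun i => α i)
  simp_rw [hL] at h
  rw [h, hC, pow_zero, mul_one]

lemma moment2 {K : ℕ} (α : Fin K → ℝ) (hα : ∀ k, 0 < α k) (hα0 : 0 < ∑ i, α i) (j k : Fin K) :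
    ∫⁻ y, ENNReal.ofReal (y j * y k / (∑ i, y i) ^ 2)
        ∂(Measure.pi fun i => gammaMeasure (α i) 1)
      = ENNReal.ofReal ((if j = k then α j * (α j + 1) else α j * α k)
          * (1 / ((∑ i, α i) * ((∑ i, α i) + 1)))) := by
  classical
  have h := core α hα hα0 1 le_rfl
    (fun i => (if i = j then 1 else 0) + (if i = k then 1 else 0))
    (by rw [Finset.sum_add_distrib]; simp)
  have hL : ∀ y : Fin K → ℝ,
      (∏ i, y i ^ ((if i = j then 1 else 0) + (if i = k then 1 else 0) : ℕ)) / (∑ i, y i) ^ (1+1)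
      = y j * y k / (∑ i, y i) ^ 2 := by
    intro y
    have h1 : ∀ i, y i ^ ((if i = j then 1 else 0) + (if i = k then 1 else 0) : ℕ)
        = (if i = j then y i else 1) * (if i = k then y i else 1) := by
      intro i
      rw [pow_add]
      congr 1
      · by_cases hij : i = j <;> simp [hij]
      · by_cases hik : i = k <;> simp [hik]
    simp_rw [h1, Finset.prod_mul_distrib]
    rw [Fintype.prod_ite_eq' j (fun i => y i), Fintype.prod_ite_eq' k (fun i => y i)]
  have hC : (∏ i, Real.Gamma (α i + ((if i = j then 1 else 0) + (if i = k then 1 else 0) : ℕ))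
        / Real.Gamma (α i))
      = (if j = k then α j * (α j + 1) else α j * α k) := by
    by_cases hjk : j = k
    · subst hjk
      rw [if_pos rfl]
      have h1 : ∀ i, Real.Gamma (α i + ((if i = j then 1 else 0) + (if i = j then 1 else 0) : ℕ))
          / Real.Gamma (α i) = if i = j then α i * (α i + 1) else 1 := by
        intro i
        by_cases hij : i = j
        · simp only [hij, if_true]
          norm_num
          rw [show (α j + 2 : ℝ) = α j + 1 + 1 by ring,
            Real.Gamma_add_one (by have := hα j; positivity), Real.Gamma_add_one (hα j).ne']
          field_simp [(Real.Gamma_pos_of_pos (hα j)).ne']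
        · simp only [hij, if_false]
          norm_num
          exact (Real.Gamma_pos_of_pos (hα i)).ne'
      simp_rw [h1]
      rw [Fintype.prod_ite_eq' j (fun i => α i * (α i + 1))]
    · rw [if_neg hjk]
      have h1 : ∀ i, Real.Gamma (α i + ((if i = j then 1 else 0) + (if i = k then 1 else 0) : ℕ))
          / Real.Gamma (α i)
          = (if i = j then α i else 1) * (if i = k then α i else 1) := by
        intro i
        by_cases hij : i = j
        · subst hij
          simp only [if_pos rfl, if_neg hjk]
          norm_num
          rw [Real.Gamma_add_one (hα i).ne']
          exact mul_div_cancel_right₀ _ (Real.Gamma_pos_of_pos (hα i)).ne'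
        · by_cases hik : i = k
          · subst hik
            simp only [if_pos rfl, if_neg hij]
            norm_num
            rw [Real.Gamma_add_one (hα i).ne']
            exact mul_div_cancel_right₀ _ (Real.Gamma_pos_of_pos (hα i)).ne'
          · simp only [if_neg hij, if_neg hik]
            norm_num
            exact (Real.Gamma_pos_of_pos (hα i)).ne'
      simp_rw [h1, Finset.prod_mul_distrib]
      rw [Fintype.prod_ite_eq' j (fun i => α i), Fintype.prod_ite_eq' k (fun i => α i)]
  simp_rw [hL] at h
  rw [h, hC, pow_one]

/-- STATEMENT 16 (LDA second-order moment identity), stated entrywise: with the words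
represented as standard basis vectors `e_v = Pi.single v 1` of `ℝ^V`,
`E[x ⊗ x'] − (α_0/(α_0+1)) E[x] ⊗ E[x'] = Σ_k (α_k/(α_0(α_0+1))) μ_k ⊗ μ_k`. -/
theorem stmt16 {K V : ℕ} (α : Fin K → ℝ) (hα : ∀ k, 0 < α k)
    (μs : Fin K → Fin V → ℝ) (hμpos : ∀ k v, 0 ≤ μs k v)
    (hμsum : ∀ k, ∑ v, μs k v = 1) :
    ∀ a b : Fin V,
      (∫ p : Fin V × Fin V, (Pi.single p.1 1 : Fin V → ℝ) a * (Pi.single p.2 1 : Fin V → ℝ) b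
          ∂(wordPairMeasure α μs)) -
        ((∑ i, α i) / ((∑ i, α i) + 1)) *
          ((∫ p : Fin V × Fin V, (Pi.single p.1 1 : Fin V → ℝ) a ∂(wordPairMeasure α μs)) *
           (∫ p : Fin V × Fin V, (Pi.single p.2 1 : Fin V → ℝ) b ∂(wordPairMeasure α μs))) =
      ∑ k, (α k / ((∑ i, α i) * ((∑ i, α i) + 1))) * (μs k a * μs k b) := by
  classical
  intro a b
  have hsing : ∀ v w : Fin V, 0 ≤ (Pi.single v 1 : Fin V → ℝ) w := by
    intro v w
    rw [Pi.single_apply]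
    split_ifs <;> norm_num
  have hconv : ∀ F : Fin V × Fin V → ℝ, (∀ p, 0 ≤ F p) →
      ∫ p, F p ∂(wordPairMeasure α μs)
        = (∫⁻ p, ENNReal.ofReal (F p) ∂(wordPairMeasure α μs)).toReal := by
    intro F hF
    rw [integral_eq_lintegral_of_nonneg_ae (ae_of_all _ hF)
      (measurable_of_countable F).aestronglyMeasurable]
  have hIa : ∀ (a : Fin V) (k : Fin K),
      (∑ v, ENNReal.ofReal (μs k v)
        * ENNReal.ofReal ((Pi.single v 1 : Fin V → ℝ) a)) = ENNReal.ofReal (μs k a) := by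
    intro a k
    have hterm : ∀ v : Fin V, ENNReal.ofReal (μs k v)
        * ENNReal.ofReal ((Pi.single v 1 : Fin V → ℝ) a)
        = if a = v then ENNReal.ofReal (μs k v) else 0 := by
      intro v
      rw [Pi.single_apply]
      by_cases hv : a = v <;> simp [hv]
    simp_rw [hterm]
    rw [Finset.sum_ite_eq]
    simp
  -- useful measurability facts
  have hmS : Measurable fun y : Fin K → ℝ => ∑ i, y i :=
    Finset.measurable_sum _ fun i _ => measurable_pi_apply i
  rcases Nat.eq_zero_or_pos K with hK | hK
  · -- degenerate case K = 0
    subst hK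
    have h0 : ∀ f g : Fin V → ℝ≥0∞, ∫⁻ p, f p.1 * g p.2 ∂wordPairMeasure α μs = 0 := by
      intro f g
      rw [lintegral_wordPairMeasure]
      simp
    have hz2' : ∫⁻ p : Fin V × Fin V, ENNReal.ofReal
        ((Pi.single p.1 1 : Fin V → ℝ) a * (Pi.single p.2 1 : Fin V → ℝ) b)
        ∂(wordPairMeasure α μs) = 0 := by
      rw [lintegral_congr (g := fun p : Fin V × Fin V =>
        (fun v => ENNReal.ofReal ((Pi.single v 1 : Fin V → ℝ) a)) p.1 *
        (fun v => ENNReal.ofReal ((Pi.single v 1 : Fin V → ℝ) b)) p.2)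
        (fun p => ENNReal.ofReal_mul (hsing _ _))]
      exact h0 (fun v => ENNReal.ofReal ((Pi.single v 1 : Fin V → ℝ) a))
        (fun v => ENNReal.ofReal ((Pi.single v 1 : Fin V → ℝ) b))
    have hz1a' : ∫⁻ p : Fin V × Fin V, ENNReal.ofReal ((Pi.single p.1 1 : Fin V → ℝ) a)
        ∂(wordPairMeasure α μs) = 0 := by
      rw [lintegral_congr (g := fun p : Fin V × Fin V =>
        (fun v => ENNReal.ofReal ((Pi.single v 1 : Fin V → ℝ) a)) p.1 *
        (fun _ => (1:ℝ≥0∞)) p.2) (fun p => (mul_one _).symm)]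
      exact h0 (fun v => ENNReal.ofReal ((Pi.single v 1 : Fin V → ℝ) a)) (fun _ => 1)
    have hz1b' : ∫⁻ p : Fin V × Fin V, ENNReal.ofReal ((Pi.single p.2 1 : Fin V → ℝ) b)
        ∂(wordPairMeasure α μs) = 0 := by
      rw [lintegral_congr (g := fun p : Fin V × Fin V =>
        (fun _ => (1:ℝ≥0∞)) p.1 *
        (fun v => ENNReal.ofReal ((Pi.single v 1 : Fin V → ℝ) b)) p.2) (fun p => (one_mul _).symm)]
      exact h0 (fun _ => 1) (fun v => ENNReal.ofReal ((Pi.single v 1 : Fin V → ℝ) b))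
    rw [hconv _ (fun p => mul_nonneg (hsing _ _) (hsing _ _)), hz2',
      hconv _ (fun p => hsing _ _), hz1a',
      hconv _ (fun p => hsing _ _), hz1b']
    simp
  · -- main case K ≥ 1
    haveI : Nonempty (Fin K) := Fin.pos_iff_nonempty.mp hK
    have hα0 : 0 < ∑ i, α i := Finset.sum_pos (fun i _ => hα i) Finset.univ_nonempty
    have hα0' : (∑ i, α i) ≠ 0 := hα0.ne'
    have hα1 : (0:ℝ) < (∑ i, α i) + 1 := by linarith
    -- evaluation of the "one-coordinate" y-integral
    have hmain1 : ∀ c : Fin V,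
        ∫⁻ y, (∑ k, ENNReal.ofReal (y k / ∑ j, y j) * ENNReal.ofReal (μs k c))
          ∂(Measure.pi fun i => gammaMeasure (α i) 1)
        = ENNReal.ofReal (∑ k, μs k c * (α k * (1 / ∑ i, α i))) := by
      intro c
      rw [lintegral_congr (g := fun y : Fin K → ℝ =>
        ∑ k, ENNReal.ofReal (μs k c) * ENNReal.ofReal (y k / ∑ j, y j))
        (fun y => Finset.sum_congr rfl fun k _ => mul_comm _ _)]
      rw [lintegral_finset_sum' _ (f := fun k (y : Fin K → ℝ) => ENNReal.ofReal (μs k c) * ENNReal.ofReal (y k / ∑ j, y j)) (fun k _ =>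
        ((((measurable_pi_apply k).div hmS).ennreal_ofReal).const_mul _).aemeasurable)]
      have : ∀ k : Fin K,
          ∫⁻ y, ENNReal.ofReal (μs k c) * ENNReal.ofReal (y k / ∑ j, y j)
            ∂(Measure.pi fun i => gammaMeasure (α i) 1)
          = ENNReal.ofReal (μs k c * (α k * (1 / ∑ i, α i))) := by
        intro k
        rw [lintegral_const_mul' _ _ ENNReal.ofReal_ne_top, moment1 α hα hα0 k,
          ← ENNReal.ofReal_mul (hμpos k c)]
      simp_rw [this]
      rw [← ENNReal.ofReal_sum_of_nonneg (fun k _ => mul_nonneg (hμpos k c)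
        (mul_nonneg (hα k).le (by positivity)))]
    -- the "all-ones" factor
    have hfact1 : ∀ y : Fin K → ℝ, (∀ i, 0 < y i) →
        (∑ k, ENNReal.ofReal (y k / ∑ j, y j) * ∑ v, ENNReal.ofReal (μs k v) * (1:ℝ≥0∞))
        = 1 := by
      intro y hy
      have hS : 0 < ∑ j, y j := Finset.sum_pos (fun i _ => hy i) Finset.univ_nonempty
      have hv : ∀ k : Fin K, (∑ v, ENNReal.ofReal (μs k v) * (1:ℝ≥0∞)) = 1 := by
        intro k
        simp only [mul_one]
        rw [← ENNReal.ofReal_sum_of_nonneg (fun v _ => hμpos k v), hμsum k, ENNReal.ofReal_one]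
      simp_rw [hv]
      simp only [mul_one]
      rw [← ENNReal.ofReal_sum_of_nonneg (fun k _ => div_nonneg (hy k).le hS.le),
        ← Finset.sum_div, div_self hS.ne', ENNReal.ofReal_one]
    -- first moments
    have hE1a : ∫⁻ p : Fin V × Fin V, ENNReal.ofReal ((Pi.single p.1 1 : Fin V → ℝ) a)
        ∂(wordPairMeasure α μs)
        = ENNReal.ofReal (∑ k, μs k a * (α k * (1 / ∑ i, α i))) := by
      rw [lintegral_congr (g := fun p : Fin V × Fin V =>
        (fun v => ENNReal.ofReal ((Pi.single v 1 : Fin V → ℝ) a)) p.1 *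
        (fun _ => (1:ℝ≥0∞)) p.2) (fun p => (mul_one _).symm)]
      rw [lintegral_wordPairMeasure α μs
        (fun v => ENNReal.ofReal ((Pi.single v 1 : Fin V → ℝ) a)) (fun _ => 1)]
      simp_rw [hIa a]
      rw [← hmain1 a]
      refine lintegral_congr_ae ?_
      filter_upwards [ae_pos_pi α hα] with y hy
      rw [hfact1 y hy, mul_one]
    have hE1b : ∫⁻ p : Fin V × Fin V, ENNReal.ofReal ((Pi.single p.2 1 : Fin V → ℝ) b)
        ∂(wordPairMeasure α μs)
        = ENNReal.ofReal (∑ k, μs k b * (α k * (1 / ∑ i, α i))) := by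
      rw [lintegral_congr (g := fun p : Fin V × Fin V =>
        (fun _ => (1:ℝ≥0∞)) p.1 *
        (fun v => ENNReal.ofReal ((Pi.single v 1 : Fin V → ℝ) b)) p.2)
        (fun p => (one_mul _).symm)]
      rw [lintegral_wordPairMeasure α μs (fun _ => 1)
        (fun v => ENNReal.ofReal ((Pi.single v 1 : Fin V → ℝ) b))]
      simp_rw [hIa b]
      rw [← hmain1 b]
      refine lintegral_congr_ae ?_
      filter_upwards [ae_pos_pi α hα] with y hy
      rw [hfact1 y hy, one_mul]
    -- second moment
    have hE2 : ∫⁻ p : Fin V × Fin V, ENNReal.ofReal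
        ((Pi.single p.1 1 : Fin V → ℝ) a * (Pi.single p.2 1 : Fin V → ℝ) b)
        ∂(wordPairMeasure α μs)
        = ENNReal.ofReal (∑ j, ∑ k, μs j a * μs k b *
            ((if j = k then α j * (α j + 1) else α j * α k)
              * (1 / ((∑ i, α i) * ((∑ i, α i) + 1))))) := by
      rw [lintegral_congr (g := fun p : Fin V × Fin V =>
        (fun v => ENNReal.ofReal ((Pi.single v 1 : Fin V → ℝ) a)) p.1 *
        (fun v => ENNReal.ofReal ((Pi.single v 1 : Fin V → ℝ) b)) p.2)
        (fun p => ENNReal.ofReal_mul (hsing _ _))]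
      rw [lintegral_wordPairMeasure α μs
        (fun v => ENNReal.ofReal ((Pi.single v 1 : Fin V → ℝ) a))
        (fun v => ENNReal.ofReal ((Pi.single v 1 : Fin V → ℝ) b))]
      simp_rw [hIa a, hIa b]
      have hpt2 : ∀ y : Fin K → ℝ, (∀ i, 0 < y i) →
          (∑ k, ENNReal.ofReal (y k / ∑ j, y j) * ENNReal.ofReal (μs k a)) *
          (∑ k, ENNReal.ofReal (y k / ∑ j, y j) * ENNReal.ofReal (μs k b))
          = ∑ j, ∑ k, ENNReal.ofReal (μs j a * μs k b)
              * ENNReal.ofReal (y j * y k / (∑ i, y i) ^ 2) := by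
        intro y hy
        have hS : 0 < ∑ j, y j := Finset.sum_pos (fun i _ => hy i) Finset.univ_nonempty
        have merge : ∀ v : Fin V,
            (∑ k, ENNReal.ofReal (y k / ∑ j, y j) * ENNReal.ofReal (μs k v))
            = ENNReal.ofReal (∑ k, y k / (∑ j, y j) * μs k v) := by
          intro v
          rw [ENNReal.ofReal_sum_of_nonneg
            (fun k _ => mul_nonneg (div_nonneg (hy k).le hS.le) (hμpos k v))]
          exact Finset.sum_congr rfl fun k _ =>
            (ENNReal.ofReal_mul (div_nonneg (hy k).le hS.le)).symm
        have hsum_nonneg : ∀ v : Fin V, 0 ≤ ∑ k, y k / (∑ j, y j) * μs k v :=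
          fun v => Finset.sum_nonneg fun k _ =>
            mul_nonneg (div_nonneg (hy k).le hS.le) (hμpos k v)
        rw [merge a, merge b, ← ENNReal.ofReal_mul (hsum_nonneg a), Finset.sum_mul_sum]
        rw [ENNReal.ofReal_sum_of_nonneg (fun j _ => Finset.sum_nonneg fun k _ =>
          mul_nonneg (mul_nonneg (div_nonneg (hy j).le hS.le) (hμpos j a))
            (mul_nonneg (div_nonneg (hy k).le hS.le) (hμpos k b)))]
        refine Finset.sum_congr rfl fun j _ => ?_
        rw [ENNReal.ofReal_sum_of_nonneg (fun k _ =>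
          mul_nonneg (mul_nonneg (div_nonneg (hy j).le hS.le) (hμpos j a))
            (mul_nonneg (div_nonneg (hy k).le hS.le) (hμpos k b)))]
        refine Finset.sum_congr rfl fun k _ => ?_
        rw [← ENNReal.ofReal_mul (mul_nonneg (hμpos j a) (hμpos k b))]
        congr 1
        ring
      rw [lintegral_congr_ae ((ae_pos_pi α hα).mono fun y hy => hpt2 y hy)]
      rw [lintegral_finset_sum' _ (f := fun j (y : Fin K → ℝ) => ∑ k, ENNReal.ofReal (μs j a * μs k b) * ENNReal.ofReal (y j * y k / (∑ i, y i) ^ 2)) (fun j _ => (Finset.measurable_sum _ (f := fun k (y : Fin K → ℝ) => ENNReal.ofReal (μs j a * μs k b) * ENNReal.ofReal (y j * y k / (∑ i, y i) ^ 2)) fun k _ =>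
        ((((measurable_pi_apply j).mul (measurable_pi_apply k)).div
            (hmS.pow_const 2)).ennreal_ofReal.const_mul _)).aemeasurable)]
      have hjk : ∀ j : Fin K,
          ∫⁻ y, (∑ k, ENNReal.ofReal (μs j a * μs k b)
              * ENNReal.ofReal (y j * y k / (∑ i, y i) ^ 2))
            ∂(Measure.pi fun i => gammaMeasure (α i) 1)
          = ∑ k, ENNReal.ofReal (μs j a * μs k b *
              ((if j = k then α j * (α j + 1) else α j * α k)
                * (1 / ((∑ i, α i) * ((∑ i, α i) + 1))))) := by
        intro j
        rw [lintegral_finset_sum' _ (f := fun k (y : Fin K → ℝ) => ENNReal.ofReal (μs j a * μs k b) * ENNReal.ofReal (y j * y k / (∑ i, y i) ^ 2)) (fun k _ =>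
          (((by fun_prop : Measurable fun y : Fin K → ℝ => y j * y k / (∑ i, y i) ^ 2
              ).ennreal_ofReal).const_mul _).aemeasurable)]
        refine Finset.sum_congr rfl fun k _ => ?_
        rw [lintegral_const_mul' _ _ ENNReal.ofReal_ne_top, moment2 α hα hα0 j k,
          ← ENNReal.ofReal_mul (mul_nonneg (hμpos j a) (hμpos k b))]
      have htermnn : ∀ j k : Fin K, 0 ≤ μs j a * μs k b *
          ((if j = k then α j * (α j + 1) else α j * α k)
            * (1 / ((∑ i, α i) * ((∑ i, α i) + 1)))) := by
        intro j k
        have hfac : (0:ℝ) ≤ (if j = k then α j * (α j + 1) else α j * α k) := by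
          split_ifs
          · have := hα j; positivity
          · exact mul_nonneg (hα j).le (hα k).le
        exact mul_nonneg (mul_nonneg (hμpos j a) (hμpos k b))
          (mul_nonneg hfac (by positivity))
      simp_rw [hjk]
      rw [ENNReal.ofReal_sum_of_nonneg
        (fun j _ => Finset.sum_nonneg fun k _ => htermnn j k)]
      refine Finset.sum_congr rfl fun j _ => ?_
      rw [ENNReal.ofReal_sum_of_nonneg (fun k _ => htermnn j k)]
    -- put everything together
    rw [hconv _ (fun p => mul_nonneg (hsing _ _) (hsing _ _)), hE2,
      hconv _ (fun p => hsing _ _), hE1a, hconv _ (fun p => hsing _ _), hE1b]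
    rw [ENNReal.toReal_ofReal, ENNReal.toReal_ofReal, ENNReal.toReal_ofReal]
    · -- final algebra
      rw [Finset.sum_mul_sum, Finset.mul_sum, ← Finset.sum_sub_distrib]
      have hterm : ∀ j : Fin K,
          (∑ k, μs j a * μs k b * ((if j = k then α j * (α j + 1) else α j * α k)
              * (1 / ((∑ i, α i) * ((∑ i, α i) + 1)))))
            - (∑ i, α i) / ((∑ i, α i) + 1) *
              ∑ k, μs j a * (α j * (1 / ∑ i, α i)) * (μs k b * (α k * (1 / ∑ i, α i)))
          = α j / ((∑ i, α i) * ((∑ i, α i) + 1)) * (μs j a * μs j b) := by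
        intro j
        rw [Finset.mul_sum, ← Finset.sum_sub_distrib]
        have hik : ∀ k : Fin K,
            μs j a * μs k b * ((if j = k then α j * (α j + 1) else α j * α k)
                * (1 / ((∑ i, α i) * ((∑ i, α i) + 1))))
              - (∑ i, α i) / ((∑ i, α i) + 1) *
                (μs j a * (α j * (1 / ∑ i, α i)) * (μs k b * (α k * (1 / ∑ i, α i))))
            = if j = k then α j / ((∑ i, α i) * ((∑ i, α i) + 1)) * (μs j a * μs j b)
              else 0 := by
          intro k
          by_cases hjk : j = k
          · subst hjk
            rw [if_pos rfl, if_pos rfl]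
            field_simp
            ring
          · rw [if_neg hjk, if_neg hjk]
            field_simp
            ring
        simp_rw [hik]
        rw [Finset.sum_ite_eq]
        simp
      simp_rw [hterm]
    · exact Finset.sum_nonneg fun k _ => mul_nonneg (hμpos k b)
        (mul_nonneg (hα k).le (by positivity))
    · exact Finset.sum_nonneg fun k _ => mul_nonneg (hμpos k a)
        (mul_nonneg (hα k).le (by positivity))
    · refine Finset.sum_nonneg fun j _ => Finset.sum_nonneg fun k _ => ?_
      have hfac : (0:ℝ) ≤ (if j = k then α j * (α j + 1) else α j * α k) := by
        split_ifs
        · have := hα j; positivity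
        · exact mul_nonneg (hα j).le (hα k).le
      exact mul_nonneg (mul_nonneg (hμpos j a) (hμpos k b))
        (mul_nonneg hfac (by positivity))

end Aux
end
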